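/- arXiv:1101.4887 — 8 statements merged into one kernel-verified Lean document; each statement's English description precedes it below -/
import Mathlib

section
/- Let f be a non-vanishing log-concave probability density on ℝ with cumulative distribution function J(t) = ∫_{-∞}^t f(s) ds. Then the function u(t) = -log(1 - J(t)) is convex on ℝ. -/
open MeasureTheory Set

/-- Quadrilateral inequality for convex functions. -/
lemma quad_ineq {g : ℝ → ℝ} (hg : ConvexOn ℝ Set.univ g) {x s c : ℝ}
    (hxs : x ≤ s) (hc : 0 ≤ c) : g (x + c) + g s ≤ g x + g (s + c) := by
  rcases eq_or_lt_of_le (by linarith : x ≤ s + c) with h | h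
  · have hc0 : c = 0 := by linarith
    have hsx : s = x := by linarith
    simp [hc0, hsx]
  · set T := s + c - x with hT
    have hTpos : 0 < T := by linarith
    have ha : (0:ℝ) ≤ (s - x) / T := div_nonneg (by linarith) hTpos.le
    have hb : (0:ℝ) ≤ c / T := div_nonneg hc hTpos.le
    have hab : (s - x) / T + c / T = 1 := by
      rw [← add_div, div_eq_one_iff_eq hTpos.ne']; linarith
    have hba : c / T + (s - x) / T = 1 := by linarith
    have h1 : g (x + c) ≤ ((s - x) / T) * g x + (c / T) * g (s + c) := by
      have := hg.2 (mem_univ x) (mem_univ (s + c)) ha hb hab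
      have hpt : ((s - x) / T) • x + (c / T) • (s + c) = x + c := by
        rw [smul_eq_mul, smul_eq_mul, div_mul_eq_mul_div, div_mul_eq_mul_div, ← add_div,
          div_eq_iff hTpos.ne', hT]; ring
      rw [hpt] at this
      simpa using this
    have h2 : g s ≤ (c / T) * g x + ((s - x) / T) * g (s + c) := by
      have := hg.2 (mem_univ x) (mem_univ (s + c)) hb ha hba
      have hpt : (c / T) • x + ((s - x) / T) • (s + c) = s := by
        rw [smul_eq_mul, smul_eq_mul, div_mul_eq_mul_div, div_mul_eq_mul_div, ← add_div,
          div_eq_iff hTpos.ne', hT]; ring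
      rw [hpt] at this
      simpa using this
    have e1 : (s - x) / T * g x + c / T * g (s + c) + (c / T * g x + (s - x) / T * g (s + c))
        = g x + g (s + c) := by linear_combination (g x + g (s + c)) * hab
    linarith [add_le_add h1 h2]

theorem stmt0 (f g : ℝ → ℝ) (hg : ConvexOn ℝ Set.univ g)
    (hf : ∀ t, f t = Real.exp (-g t))
    (hint : ∫ s, f s = 1)
    (J : ℝ → ℝ) (hJ : ∀ t, J t = ∫ s in Set.Iic t, f s) :
    ConvexOn ℝ Set.univ (fun t => -Real.log (1 - J t)) := by
  have hfpos : ∀ t, 0 < f t := fun t => (hf t) ▸ Real.exp_pos _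
  have hgc : Continuous g := hg.locallyLipschitz.continuous
  have hfc : Continuous f := by
    have : f = fun t => Real.exp (-g t) := funext hf
    rw [this]; exact Real.continuous_exp.comp hgc.neg
  have hfint : Integrable f := by
    by_contra h
    rw [integral_undef h] at hint; norm_num at hint
  -- survival function
  set S : ℝ → ℝ := fun t => ∫ s in Ioi t, f s with hSdef
  have hS : ∀ t, 1 - J t = S t := by
    intro t
    have := integral_add_compl (measurableSet_Iic (a := t)) hfint
    rw [compl_Iic] at this
    rw [hJ t, hSdef]
    rw [hint] at this
    linarith
  have hSpos : ∀ t, 0 < S t := by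
    intro t
    rw [hSdef]
    rw [setIntegral_pos_iff_support_of_nonneg_ae
      (Filter.Eventually.of_forall fun s => (hfpos s).le) (hfint.integrableOn)]
    have hsupp : Function.support f ∩ Ioi t = Ioi t := by
      apply inter_eq_self_of_subset_right
      intro s _; exact (hfpos s).ne'
    rw [hsupp]
    simp [Real.volume_Ioi]
  -- translation identity
  have htrans : ∀ x y : ℝ, x ≤ y → S y = ∫ s in Ioi x, f (s + (y - x)) := by
    intro x y hxy
    set c := y - x with hc
    simp only [hSdef]
    rw [← integral_indicator measurableSet_Ioi, ← integral_indicator measurableSet_Ioi]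
    rw [← integral_add_right_eq_self ((Ioi y).indicator f) c]
    congr 1
    funext s
    by_cases h : x < s
    · rw [indicator_of_mem (by simp only [mem_Ioi]; linarith [hc.le, hc.ge] : s + c ∈ Ioi y),
        indicator_of_mem (mem_Ioi.2 h)]
    · rw [indicator_of_notMem (by simp only [mem_Ioi, not_lt] at h ⊢; linarith [hc.le, hc.ge] : s + c ∉ Ioi y),
        indicator_of_notMem (by simpa using h)]
  -- hazard rate monotone
  have hmono : Monotone (fun t => f t / S t) := by
    intro x y hxy
    rw [div_le_div_iff₀ (hSpos x) (hSpos y)]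
    set c := y - x with hc
    have hc0 : 0 ≤ c := by simp [hc]; linarith
    have hyx : y = x + c := by ring
    rw [htrans x y hxy]
    have hint1 : IntegrableOn (fun s => f x * f (s + c)) (Ioi x) := by
      exact ((hfint.comp_add_right c).const_mul (f x)).integrableOn
    have hint2 : IntegrableOn (fun s => f y * f s) (Ioi x) :=
      (hfint.const_mul (f y)).integrableOn
    calc f x * ∫ s in Ioi x, f (s + c)
        = ∫ s in Ioi x, f x * f (s + c) := (integral_const_mul _ _).symm
      _ ≤ ∫ s in Ioi x, f y * f s := by
          apply setIntegral_mono_on hint1 hint2 measurableSet_Ioi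
          intro s hs
          rw [hf x, hf y, hf s, hf (s + c), hyx, ← Real.exp_add, ← Real.exp_add]
          apply Real.exp_le_exp.2
          have := quad_ineq hg (le_of_lt (mem_Ioi.1 hs)) hc0
          linarith
      _ = f y * S x := by rw [integral_const_mul]
  -- derivative of u
  have hJder : ∀ t, HasDerivAt J (f t) t := by
    intro t
    have hrepr : ∀ r, J r = J 0 + ∫ s in (0:ℝ)..r, f s := by
      intro r
      have := intervalIntegral.integral_Iic_sub_Iic (μ := volume) (f := f) (a := (0:ℝ)) (b := r)
        hfint.integrableOn hfint.integrableOn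
      rw [hJ r, hJ 0]
      linarith [this]
    have hD : HasDerivAt (fun r => ∫ s in (0:ℝ)..r, f s) (f t) t := by
      apply intervalIntegral.integral_hasDerivAt_right
        hfint.intervalIntegrable
        hfc.aestronglyMeasurable.stronglyMeasurableAtFilter
        hfc.continuousAt
    have : HasDerivAt (fun r => J 0 + ∫ s in (0:ℝ)..r, f s) (f t) t := hD.const_add _
    exact this.congr_of_eventuallyEq (Filter.Eventually.of_forall hrepr)
  have huder : ∀ t, HasDerivAt (fun r => -Real.log (1 - J r)) (f t / S t) t := by
    intro t
    have h1 : HasDerivAt (fun r => 1 - J r) (-f t) t := by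
      simpa using (hJder t).const_sub 1
    have h2 : HasDerivAt (fun r => Real.log (1 - J r)) ((1 - J t)⁻¹ * (-f t)) t :=
      (Real.hasDerivAt_log (by rw [hS t]; exact (hSpos t).ne')).comp t h1
    have h3 := h2.neg
    have h4 : f t / S t = -((1 - J t)⁻¹ * -f t) := by
      rw [hS t]; ring
    rw [h4]; exact h3
  apply Monotone.convexOn_univ_of_deriv
  · exact fun t => (huder t).differentiableAt
  · have hderiv : deriv (fun t => -Real.log (1 - J t)) = fun t => f t / S t :=
      funext fun t => (huder t).deriv
    rw [hderiv]
    exact hmono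
end

section
/- Let f be a log-concave probability density on ℝ of class C², f = e^{-g} with g convex, with cumulative distribution J. Then the function ψ(t) = f(J^{-1}(1-t)) is concave on (0,1). -/
open MeasureTheory Set

theorem stmt1 (f g : ℝ → ℝ) (hg : ConvexOn ℝ Set.univ g)
    (hg2 : ContDiff ℝ 2 g)
    (hf : ∀ t, f t = Real.exp (-g t))
    (hint : ∫ s, f s = 1)
    (J : ℝ → ℝ) (hJ : ∀ t, J t = ∫ s in Set.Iic t, f s)
    (Jinv : ℝ → ℝ)
    (hJinv₁ : ∀ y ∈ Set.Ioo (0:ℝ) 1, J (Jinv y) = y)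
    (hJinv₂ : ∀ t : ℝ, Jinv (J t) = t) :
    ConcaveOn ℝ (Set.Ioo 0 1) (fun t => f (Jinv (1 - t))) := by
  have hfpos : ∀ t, 0 < f t := fun t => by rw [hf]; exact Real.exp_pos _
  have hgdiff : Differentiable ℝ g := hg2.differentiable (by norm_num)
  have hfc : Continuous f := by
    have : Continuous fun t => Real.exp (-g t) := (hg2.continuous.neg).rexp
    exact (funext hf ▸ this : Continuous f)
  have hintf : Integrable f := by
    by_contra h
    rw [integral_undef h] at hint
    norm_num at hint
  -- positivity of integrals over Iic and Ioi
  have hIic_pos : ∀ t, 0 < ∫ s in Iic t, f s := by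
    intro t
    rw [setIntegral_pos_iff_support_of_nonneg_ae
      (Filter.Eventually.of_forall fun x => (hfpos x).le) hintf.integrableOn]
    have hs : Function.support f = univ := by
      ext x; simp [Function.mem_support, (hfpos x).ne']
    rw [hs, univ_inter, Real.volume_Iic]
    exact ENNReal.zero_lt_top
  have hIoi_pos : ∀ t, 0 < ∫ s in Ioi t, f s := by
    intro t
    rw [setIntegral_pos_iff_support_of_nonneg_ae
      (Filter.Eventually.of_forall fun x => (hfpos x).le) hintf.integrableOn]
    have hs : Function.support f = univ := by
      ext x; simp [Function.mem_support, (hfpos x).ne']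
    rw [hs, univ_inter, Real.volume_Ioi]
    exact ENNReal.zero_lt_top
  have hJmem : ∀ t, J t ∈ Ioo (0:ℝ) 1 := by
    intro t
    have hsum : (∫ s in Iic t, f s) + ∫ s in Ioi t, f s = 1 := by
      rw [intervalIntegral.integral_Iic_add_Ioi hintf.integrableOn hintf.integrableOn, hint]
    constructor
    · rw [hJ]; exact hIic_pos t
    · rw [hJ]; linarith [hIoi_pos t]
  -- J strictly monotone
  have hJsub : ∀ a b : ℝ, J b - J a = ∫ x in a..b, f x := by
    intro a b
    rw [hJ, hJ]
    exact intervalIntegral.integral_Iic_sub_Iic hintf.integrableOn hintf.integrableOn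
  have hJmono : StrictMono J := by
    intro a b hab
    have h := hJsub a b
    have hpos : 0 < ∫ x in a..b, f x :=
      intervalIntegral.intervalIntegral_pos_of_pos hintf.intervalIntegrable hfpos hab
    linarith
  -- derivative of J
  have hJder : ∀ t, HasDerivAt J (f t) t := by
    intro t
    have h1 : HasDerivAt (fun u => ∫ x in (0:ℝ)..u, f x) (f t) t :=
      intervalIntegral.integral_hasDerivAt_right hintf.intervalIntegrable
        (hfc.stronglyMeasurableAtFilter _ _) hfc.continuousAt
    have h2 : HasDerivAt (fun u => (∫ x in (0:ℝ)..u, f x) + J 0) (f t) t := h1.add_const _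
    have : (fun u => (∫ x in (0:ℝ)..u, f x) + J 0) = J := by
      funext u
      have := hJsub 0 u
      linarith
    rwa [this] at h2
  -- Jinv strictly monotone on Ioo 0 1
  have hJinvmono : StrictMonoOn Jinv (Ioo (0:ℝ) 1) := by
    intro a ha b hb hab
    by_contra h
    push_neg at h
    have := hJmono.monotone h
    rw [hJinv₁ a ha, hJinv₁ b hb] at this
    linarith
  -- continuity of Jinv on Ioo 0 1
  have hJinvcont : ∀ y ∈ Ioo (0:ℝ) 1, ContinuousAt Jinv y := by
    intro y hy
    refine hJinvmono.continuousAt_of_image_mem_nhds (isOpen_Ioo.mem_nhds hy) ?_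
    have : Jinv '' Ioo 0 1 = univ := by
      apply eq_univ_of_forall
      intro t
      exact ⟨J t, hJmem t, hJinv₂ t⟩
    rw [this]
    exact Filter.univ_mem
  -- derivative of Jinv
  have hJinvder : ∀ y ∈ Ioo (0:ℝ) 1, HasDerivAt Jinv (f (Jinv y))⁻¹ y := by
    intro y hy
    refine HasDerivAt.of_local_left_inverse (hJinvcont y hy) (hJder (Jinv y))
      (hfpos _).ne' ?_
    exact Filter.eventually_of_mem (isOpen_Ioo.mem_nhds hy) hJinv₁
  -- derivative of f
  have hfder : ∀ x, HasDerivAt f (-(deriv g x) * f x) x := by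
    intro x
    have h1 : HasDerivAt g (deriv g x) x := (hgdiff x).hasDerivAt
    have h2 : HasDerivAt (fun t => Real.exp (-g t)) (Real.exp (-g x) * -(deriv g x)) x :=
      (h1.neg).exp
    have : (fun t => Real.exp (-g t)) = f := by funext t; rw [hf]
    rw [this, ← hf] at h2
    convert h2 using 1
    ring
  -- derivative of ψ
  have hψder : ∀ t ∈ Ioo (0:ℝ) 1, HasDerivAt (fun t => f (Jinv (1 - t)))
      (deriv g (Jinv (1 - t))) t := by
    intro t ht
    have ht' : (1 : ℝ) - t ∈ Ioo (0:ℝ) 1 := by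
      constructor <;> [linarith [ht.2]; linarith [ht.1]]
    have h0 : HasDerivAt (fun u : ℝ => 1 - u) (-1 : ℝ) t := by
      simpa using (hasDerivAt_id t).const_sub 1
    have h1 : HasDerivAt Jinv (f (Jinv (1 - t)))⁻¹ (1 - t) := hJinvder _ ht'
    have h2 : HasDerivAt f (-(deriv g (Jinv (1 - t))) * f (Jinv (1 - t))) (Jinv (1 - t)) :=
      hfder _
    have h3 := (h2.comp (1 - t) h1).comp t h0
    refine h3.congr_deriv ?_
    have hc : f (Jinv (1 - t)) * (f (Jinv (1 - t)))⁻¹ = 1 := mul_inv_cancel₀ (hfpos (Jinv (1 - t))).ne'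
    linear_combination (deriv g (Jinv (1 - t))) * hc
  have hderiv_eq : ∀ t ∈ Ioo (0:ℝ) 1,
      deriv (fun t => f (Jinv (1 - t))) t = deriv g (Jinv (1 - t)) := fun t ht =>
    (hψder t ht).deriv
  have hdiff : DifferentiableOn ℝ (fun t => f (Jinv (1 - t))) (Ioo 0 1) := fun t ht =>
    ((hψder t ht).differentiableAt).differentiableWithinAt
  have hgmono : MonotoneOn (deriv g) univ :=
    hg.monotoneOn_deriv (fun x _ => hgdiff x)
  refine AntitoneOn.concaveOn_of_deriv (convex_Ioo 0 1)
    (hdiff.continuousOn) (by rwa [interior_Ioo]) ?_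
  rw [interior_Ioo]
  intro a ha b hb hab
  rw [hderiv_eq a ha, hderiv_eq b hb]
  have ha' : (1:ℝ) - a ∈ Ioo (0:ℝ) 1 := ⟨by linarith [ha.2], by linarith [ha.1]⟩
  have hb' : (1:ℝ) - b ∈ Ioo (0:ℝ) 1 := ⟨by linarith [hb.2], by linarith [hb.1]⟩
  have : Jinv (1 - b) ≤ Jinv (1 - a) :=
    hJinvmono.monotoneOn hb' ha' (by linarith)
  exact hgmono (mem_univ _) (mem_univ _) this
end

section
/- Let μ be a probability measure on ℝ with non-vanishing log-concave density and cumulative distribution J, and let Eμ be its mean. Then for any real numbers a, b, n with 0 < a < b < n and log n - log b - 1 > 0, one has (J^{-1}(1-a/n) - J^{-1}(1-b/n)) / (J^{-1}(1-b/n) - Eμ) ≤ (log b - log a)/(log n - log b - 1). -/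
open MeasureTheory Set Real Filter Topology

lemma lc3 {g : ℝ → ℝ} (hg : ConvexOn ℝ Set.univ g) {s t r : ℝ} (hst : s ≤ t) (htr : t ≤ r) :
    g t + g (s + r - t) ≤ g s + g r := by
  rcases eq_or_lt_of_le (hst.trans htr) with h | hsr
  · have h1 : s = t := le_antisymm hst (h ▸ htr)
    have h2 : t = r := le_antisymm htr (h ▸ hst).ge
    subst h1; subst h2; ring_nf; exact le_rfl
  · set lam := (r - t) / (r - s) with hlam
    have hrs : 0 < r - s := by linarith
    have hl0 : 0 ≤ lam := div_nonneg (by linarith) hrs.le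
    have hl1 : lam ≤ 1 := by rw [div_le_one hrs]; linarith
    have h1 : g (lam * s + (1 - lam) * r) ≤ lam * g s + (1 - lam) * g r :=
      hg.2 (mem_univ s) (mem_univ r) hl0 (by linarith) (by ring)
    have h2 : g ((1 - lam) * s + lam * r) ≤ (1 - lam) * g s + lam * g r :=
      hg.2 (mem_univ s) (mem_univ r) (by linarith) hl0 (by ring)
    have hh : lam * (r - s) = r - t := by rw [hlam]; exact div_mul_cancel₀ _ hrs.ne'
    have e1 : lam * s + (1 - lam) * r = t := by linear_combination -hh
    have e2 : (1 - lam) * s + lam * r = s + r - t := by linear_combination hh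
    rw [e1] at h1; rw [e2] at h2; linarith

lemma exp_abs_integrable {c : ℝ} (hc : 0 < c) :
    Integrable (fun x : ℝ => Real.exp (-c * |x|)) volume := by
  rw [← integrableOn_univ, ← Set.Iic_union_Ioi (a := (0:ℝ)), integrableOn_union]
  constructor
  · have h1 : IntegrableOn (fun x : ℝ => Real.exp (-c * |x|)) (Ici (0:ℝ)) volume := by
      rw [integrableOn_Ici_iff_integrableOn_Ioi]
      apply (exp_neg_integrableOn_Ioi 0 hc).congr_fun ?_ measurableSet_Ioi
      intro x hx
      simp [abs_of_pos (mem_Ioi.1 hx)]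
    have h2 := (MeasurePreserving.integrableOn_comp_preimage
      (Measure.measurePreserving_neg (volume : Measure ℝ))
      (Homeomorph.neg ℝ).measurableEmbedding (f := fun x : ℝ => Real.exp (-c * |x|))
      (s := Iic (0:ℝ))).1
    have hpre : (fun x : ℝ => -x) ⁻¹' (Iic (0:ℝ)) = Ici (0:ℝ) := by
      ext x; simp
    have h3 : IntegrableOn ((fun x : ℝ => Real.exp (-c * |x|)) ∘ (fun x : ℝ => -x))
        (Ici (0:ℝ)) volume := by
      apply h1.congr_fun ?_ measurableSet_Ici
      intro x _
      simp [Function.comp, abs_neg]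
    rw [← hpre] at h3
    exact h2 h3
  · apply (exp_neg_integrableOn_Ioi 0 hc).congr_fun ?_ measurableSet_Ioi
    intro x hx
    simp [abs_of_pos (mem_Ioi.1 hx)]


set_option maxHeartbeats 1000000 in
theorem stmt2 (f g : ℝ → ℝ) (hg : ConvexOn ℝ Set.univ g)
    (hf : ∀ t, f t = Real.exp (-g t))
    (μ : Measure ℝ)
    (hμ : μ = MeasureTheory.volume.withDensity (fun x => ENNReal.ofReal (f x)))
    (hprob : IsProbabilityMeasure μ)
    (J Jinv : ℝ → ℝ) (hJ : ∀ t, J t = (μ (Set.Iic t)).toReal)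
    (hJinv : ∀ y ∈ Set.Ioo (0:ℝ) 1, J (Jinv y) = y)
    (Eμ : ℝ) (hE : Eμ = ∫ x, x ∂μ)
    (a b n : ℝ) (ha : 0 < a) (hab : a < b) (hbn : b < n)
    (hlog : 0 < Real.log n - Real.log b - 1) :
    (Jinv (1 - a/n) - Jinv (1 - b/n)) / (Jinv (1 - b/n) - Eμ)
      ≤ (Real.log b - Real.log a) / (Real.log n - Real.log b - 1) := by
  -- continuity and positivity of the density
  have hgc : Continuous g := by
    rw [← continuousOn_univ]
    exact hg.continuousOn isOpen_univ
  have hfeq : f = fun t => Real.exp (-g t) := funext hf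
  have hfc : Continuous f := by rw [hfeq]; exact Real.continuous_exp.comp hgc.neg
  have hfpos : ∀ t, 0 < f t := fun t => (hf t) ▸ Real.exp_pos _
  have hmeas : Measurable fun x => ENNReal.ofReal (f x) := hfc.measurable.ennreal_ofReal
  -- basic measure facts
  have hμs : ∀ s : Set ℝ, MeasurableSet s → μ s = ∫⁻ x in s, ENNReal.ofReal (f x) := by
    intro s hs; rw [hμ, withDensity_apply _ hs]
  have hμfin : ∀ s : Set ℝ, μ s ≠ ⊤ := fun s => (measure_lt_top μ s).ne
  have huniv : μ Set.univ = 1 := measure_univ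
  -- f is integrable
  have hInt : Integrable f volume := by
    refine ⟨hfc.aestronglyMeasurable, ?_⟩
    rw [hasFiniteIntegral_iff_norm]
    have : ∀ x, ENNReal.ofReal ‖f x‖ = ENNReal.ofReal (f x) := by
      intro x; rw [Real.norm_eq_abs, abs_of_pos (hfpos x)]
    simp_rw [this]
    have : ∫⁻ x, ENNReal.ofReal (f x) = 1 := by
      rw [← setLIntegral_univ, ← hμs _ MeasurableSet.univ, huniv]
    rw [this]; exact ENNReal.one_lt_top
  -- the survival function
  set F : ℝ → ℝ := fun t => (μ (Set.Ioi t)).toReal with hFdef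
  have hFeq : ∀ t, F t = ∫ x in Set.Ioi t, f x := by
    intro t
    rw [MeasureTheory.integral_eq_lintegral_of_nonneg_ae
      (Filter.Eventually.of_forall fun x => (hfpos x).le)
      hfc.aestronglyMeasurable.restrict]
    simp only [hFdef]
    rw [hμs _ measurableSet_Ioi]
  have hμpos : ∀ s : Set ℝ, MeasurableSet s → volume s ≠ 0 → 0 < μ s := by
    intro s hs hvs
    rcases eq_zero_or_pos (μ s) with h | h
    · exfalso
      rw [hμs s hs] at h
      rw [lintegral_eq_zero_iff hmeas] at h
      have : (volume.restrict s) {x | ENNReal.ofReal (f x) ≠ 0} = 0 := by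
        simpa [EventuallyEq, ae_iff] using h
      rw [Measure.restrict_apply₀'] at this
      · apply hvs
        have : {x | ENNReal.ofReal (f x) ≠ 0} = Set.univ := by
          ext x; simp [ENNReal.ofReal_eq_zero, not_le, hfpos x]
        simp_all
      · exact hs.nullMeasurableSet
    · exact h
  have hFpos : ∀ t, 0 < F t :=
    fun t => ENNReal.toReal_pos (hμpos _ measurableSet_Ioi (by simp)).ne' (hμfin _)
  have hcompl : ∀ t, (μ (Set.Iic t)).toReal + F t = 1 := by
    intro t
    rw [hFdef]
    rw [← ENNReal.toReal_add (hμfin _) (hμfin _)]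
    rw [← Set.compl_Iic (a := t)] at *
    rw [measure_add_measure_compl measurableSet_Iic, huniv, ENNReal.toReal_one]
  have hJF : ∀ t, J t = 1 - F t := by
    intro t; rw [hJ t, ← hcompl t]; ring
  have hFle1 : ∀ t, F t ≤ 1 := by
    intro t
    have := hcompl t
    have h0 : 0 ≤ (μ (Set.Iic t)).toReal := ENNReal.toReal_nonneg
    linarith
  -- F s - F t = μ (Ioc s t) for s ≤ t
  have hsplit : ∀ s t : ℝ, s ≤ t → F s = (μ (Set.Ioc s t)).toReal + F t := by
    intro s t hst
    rw [hFdef]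
    rw [← ENNReal.toReal_add (hμfin _) (hμfin _)]
    rw [← measure_union _ measurableSet_Ioi, Set.Ioc_union_Ioi_eq_Ioi hst]
    exact Set.Ioc_disjoint_Ioi le_rfl
  have hFanti : StrictAnti F := by
    intro s t hst
    have h1 := hsplit s t hst.le
    have h2 : 0 < (μ (Set.Ioc s t)).toReal :=
      ENNReal.toReal_pos (hμpos _ measurableSet_Ioc (by simp [hst])).ne' (hμfin _)
    linarith
  -- fundamental theorem of calculus for F
  have hFint : ∀ s t : ℝ, s ≤ t → F s - F t = ∫ x in s..t, f x := by
    intro s t hst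
    rw [intervalIntegral.integral_of_le hst]
    rw [MeasureTheory.integral_eq_lintegral_of_nonneg_ae
      (Filter.Eventually.of_forall fun x => (hfpos x).le)
      hfc.aestronglyMeasurable.restrict]
    rw [← hμs _ measurableSet_Ioc]
    have := hsplit s t hst
    linarith
  have hFrepr : ∀ x : ℝ, F x = F 0 - ∫ y in (0:ℝ)..x, f y := by
    intro x
    rcases le_total 0 x with h | h
    · have := hFint 0 x h; linarith
    · have := hFint x 0 h
      have h2 := intervalIntegral.integral_symm (f := f) (μ := volume) x 0
      rw [h2]
      linarith
  have hFderiv : ∀ t, HasDerivAt F (-(f t)) t := by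
    intro t
    have h1 : HasDerivAt (fun x => ∫ y in (0:ℝ)..x, f y) (f t) t :=
      intervalIntegral.integral_hasDerivAt_right hInt.intervalIntegrable
        hfc.stronglyMeasurable.stronglyMeasurableAtFilter hfc.continuousAt
    have h2 : HasDerivAt (fun x => F 0 - ∫ y in (0:ℝ)..x, f y) (-(f t)) t :=
      h1.const_sub (F 0)
    exact h2.congr_of_eventuallyEq (Filter.Eventually.of_forall hFrepr)
  -- u = -log F
  set u : ℝ → ℝ := fun t => -Real.log (F t) with hudef
  have huderiv : ∀ t, HasDerivAt u (f t / F t) t := by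
    intro t
    have h1 : HasDerivAt (fun x => Real.log (F x)) (-(f t) / F t) t :=
      (hFderiv t).log (hFpos t).ne'
    have := h1.neg
    rw [neg_div, neg_neg] at this
    exact this
  have hucont : Continuous u :=
    continuous_iff_continuousAt.2 fun t => (huderiv t).continuousAt
  have hunonneg : ∀ t, 0 ≤ u t := by
    intro t
    simp only [hudef, neg_nonneg]
    exact Real.log_nonpos (hFpos t).le (hFle1 t)
  -- key log-concavity inequality : hazard rate is monotone
  have hkey : ∀ s t : ℝ, s ≤ t → f s * F t ≤ f t * F s := by
    intro s t hst
    have hIs : IntegrableOn f (Set.Ioi s) volume := hInt.integrableOn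
    have hIt : IntegrableOn f (Set.Ioi t) volume := hInt.integrableOn
    have htrans : IntegrableOn (fun r => f (r + (s - t))) (Set.Ioi t) volume := by
      have := (MeasurePreserving.integrableOn_comp_preimage
        (measurePreserving_add_right (volume : Measure ℝ) (s - t))
        (MeasurableEquiv.addRight (s - t)).measurableEmbedding
        (f := f) (s := Set.Ioi s)).2 hIs
      have hpre : (fun x : ℝ => x + (s - t)) ⁻¹' Set.Ioi s = Set.Ioi t := by
        ext x; simp only [Set.mem_preimage, Set.mem_Ioi]; constructor <;> intro h <;> linarith
      rw [hpre] at this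
      exact this
    have hshift : ∫ r in Set.Ioi t, f (r + (s - t)) = ∫ r in Set.Ioi s, f r := by
      have hpre : (fun x : ℝ => x + (s - t)) ⁻¹' Set.Ioi s = Set.Ioi t := by
        ext x; simp only [Set.mem_preimage, Set.mem_Ioi]; constructor <;> intro h <;> linarith
      rw [← hpre]
      exact MeasurePreserving.setIntegral_preimage_emb
        (measurePreserving_add_right (volume : Measure ℝ) (s - t))
        (MeasurableEquiv.addRight (s - t)).measurableEmbedding f _
    have hpt : ∀ r ∈ Set.Ioi t, f s * f r ≤ f t * f (r + (s - t)) := by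
      intro r hr
      rw [hf s, hf t, hf r, hf (r + (s - t)), ← Real.exp_add, ← Real.exp_add]
      apply Real.exp_le_exp.2
      have := lc3 hg hst (le_of_lt hr)
      have heq : s + r - t = r + (s - t) := by ring
      rw [heq] at this
      linarith
    calc f s * F t = ∫ r in Set.Ioi t, f s * f r := by
          rw [hFeq t, MeasureTheory.integral_const_mul]
      _ ≤ ∫ r in Set.Ioi t, f t * f (r + (s - t)) := by
          apply MeasureTheory.setIntegral_mono_on
            (hIt.const_mul _) (htrans.const_mul _) measurableSet_Ioi hpt
      _ = f t * ∫ r in Set.Ioi t, f (r + (s - t)) := MeasureTheory.integral_const_mul _ _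
      _ = f t * F s := by rw [hshift, hFeq s]
  have hhaz : ∀ s t : ℝ, s ≤ t → f s / F s ≤ f t / F t := by
    intro s t hst
    rw [div_le_div_iff₀ (hFpos s) (hFpos t)]
    exact hkey s t hst
  -- u is convex
  have huconv : ConvexOn ℝ Set.univ u := by
    apply Monotone.convexOn_univ_of_deriv
    · exact fun t => (huderiv t).differentiableAt
    · have hde : deriv u = fun t => f t / F t := funext fun t => (huderiv t).deriv
      rw [hde]
      exact fun s t hst => hhaz s t hst
  -- g has an increasing pair on the right
  have hge : ∃ x y : ℝ, x < y ∧ g x < g y := by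
    by_contra hcon
    push_neg at hcon
    have hmono : ∀ x y : ℝ, x ≤ y → f x ≤ f y := by
      intro x y hxy
      rcases eq_or_lt_of_le hxy with rfl | hlt
      · exact le_rfl
      · rw [hf x, hf y]; exact Real.exp_le_exp.2 (neg_le_neg (hcon x y hlt))
    have hbig : ENNReal.ofReal (f 0) * volume (Set.Ioi (0:ℝ)) ≤ μ (Set.Ioi 0) := by
      rw [hμs _ measurableSet_Ioi, ← setLIntegral_const]
      exact setLIntegral_mono hmeas
        (fun x hx => ENNReal.ofReal_le_ofReal (hmono 0 x (le_of_lt hx)))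
    rw [Real.volume_Ioi, ENNReal.mul_top
      (by simp [ENNReal.ofReal_eq_zero, not_le, hfpos 0])] at hbig
    exact hμfin _ (top_le_iff.1 hbig)
  have hgd : ∃ x y : ℝ, x < y ∧ g y < g x := by
    by_contra hcon
    push_neg at hcon
    have hmono : ∀ x y : ℝ, x ≤ y → f y ≤ f x := by
      intro x y hxy
      rcases eq_or_lt_of_le hxy with rfl | hlt
      · exact le_rfl
      · rw [hf x, hf y]; exact Real.exp_le_exp.2 (neg_le_neg (hcon x y hlt))
    have hbig : ENNReal.ofReal (f 0) * volume (Set.Iio (0:ℝ)) ≤ μ (Set.Iio 0) := by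
      rw [hμs _ measurableSet_Iio, ← setLIntegral_const]
      exact setLIntegral_mono hmeas
        (fun x hx => ENNReal.ofReal_le_ofReal (hmono x 0 (le_of_lt hx)))
    rw [Real.volume_Iio, ENNReal.mul_top
      (by simp [ENNReal.ofReal_eq_zero, not_le, hfpos 0])] at hbig
    exact hμfin _ (top_le_iff.1 hbig)
  -- exponential decay of f
  obtain ⟨x₁, y₁, hxy₁, hgxy₁⟩ := hge
  obtain ⟨x₂, y₂, hxy₂, hgxy₂⟩ := hgd
  set s₁ : ℝ := (g y₁ - g x₁) / (y₁ - x₁) with hs₁def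
  have hs₁ : 0 < s₁ := div_pos (by linarith) (by linarith)
  have hright : ∀ t, y₁ < t → f t ≤ Real.exp (-g y₁ + s₁ * y₁) * Real.exp (-s₁ * t) := by
    intro t ht
    have hslope := hg.slope_mono_adjacent (mem_univ x₁) (mem_univ t) hxy₁ ht
    rw [← Real.exp_add, hf t]
    apply Real.exp_le_exp.2
    have h1 : s₁ * (t - y₁) ≤ g t - g y₁ := by
      rw [← hs₁def] at hslope
      have h2 := mul_le_mul_of_nonneg_right hslope (by linarith : (0:ℝ) ≤ t - y₁)
      rwa [div_mul_cancel₀ _ (by linarith : t - y₁ ≠ 0)] at h2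
    nlinarith
  set s₂ : ℝ := (g y₂ - g x₂) / (y₂ - x₂) with hs₂def
  have hs₂ : s₂ < 0 := div_neg_of_neg_of_pos (by linarith) (by linarith)
  have hleft : ∀ t, t < x₂ → f t ≤ Real.exp (-g x₂ + s₂ * x₂) * Real.exp (-s₂ * t) := by
    intro t ht
    have hslope := hg.slope_mono_adjacent (mem_univ t) (mem_univ y₂) ht hxy₂
    rw [← Real.exp_add, hf t]
    apply Real.exp_le_exp.2
    have h1 : g x₂ - g t ≤ s₂ * (x₂ - t) := by
      rw [← hs₂def] at hslope
      have h2 := mul_le_mul_of_nonneg_right hslope (by linarith : (0:ℝ) ≤ x₂ - t)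
      rwa [div_mul_cancel₀ _ (by linarith : x₂ - t ≠ 0)] at h2
    nlinarith
  -- a uniform exponential bound
  set c : ℝ := min s₁ (-s₂) with hcdef
  have hc : 0 < c := lt_min hs₁ (by linarith)
  have hCbound : ∃ C : ℝ, 0 < C ∧ ∀ t, f t ≤ C * Real.exp (-c * |t|) := by
    set M : ℝ := max y₁ 0 with hMdef
    set m : ℝ := min x₂ 0 with hmdef
    obtain ⟨B, hB⟩ := (isCompact_Icc (a := m) (b := M)).exists_bound_of_continuousOn
      hfc.continuousOn
    set R : ℝ := max (|m|) (|M|) with hRdef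
    set C₁ : ℝ := Real.exp (-g y₁ + s₁ * y₁) with hC₁def
    set C₂ : ℝ := Real.exp (-g x₂ + s₂ * x₂) with hC₂def
    refine ⟨max C₁ (max C₂ ((B + 1) * Real.exp (c * R))), ?_, ?_⟩
    · exact lt_max_of_lt_left (Real.exp_pos _)
    · intro t
      rcases lt_or_ge t m with h1 | h1
      · have ht2 : t < x₂ := lt_of_lt_of_le h1 (min_le_left _ _)
        calc f t ≤ C₂ * Real.exp (-s₂ * t) := hleft t ht2
          _ ≤ C₂ * Real.exp (-c * |t|) := by
              apply mul_le_mul_of_nonneg_left _ (Real.exp_pos _).le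
              apply Real.exp_le_exp.2
              have ht0 : t < 0 := lt_of_lt_of_le h1 (min_le_right _ _)
              rw [abs_of_neg ht0]
              have : c ≤ -s₂ := min_le_right _ _
              nlinarith
          _ ≤ _ := by
              apply mul_le_mul_of_nonneg_right _ (Real.exp_pos _).le
              exact le_max_of_le_right (le_max_left _ _)
      · rcases le_or_gt t M with h2 | h2
        · have hmem : t ∈ Set.Icc m M := ⟨h1, h2⟩
          have hfB : f t ≤ B := by
            have := hB t hmem
            rw [Real.norm_eq_abs, abs_of_pos (hfpos t)] at this
            exact this
          have hRt : |t| ≤ R := by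
            rw [abs_le]
            constructor
            · have : -|m| ≤ m := neg_abs_le m
              have : -R ≤ -|m| := neg_le_neg (le_max_left _ _)
              linarith [hmem.1, neg_abs_le m, neg_le_neg (le_max_left (|m|) (|M|))]
            · exact le_trans hmem.2 (le_trans (le_abs_self M) (le_max_right _ _))
          calc f t ≤ B := hfB
            _ ≤ (B + 1) * (Real.exp (c * R) * Real.exp (-c * |t|)) := by
                rw [← Real.exp_add]
                have hge1 : (1:ℝ) ≤ Real.exp (c * R + -c * |t|) := by
                  rw [← Real.exp_zero]
                  apply Real.exp_le_exp.2
                  nlinarith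
                nlinarith [hfpos t, hfB, Real.exp_pos (c * R + -c * |t|)]
            _ = (B + 1) * Real.exp (c * R) * Real.exp (-c * |t|) := by ring
            _ ≤ _ := by
                apply mul_le_mul_of_nonneg_right _ (Real.exp_pos _).le
                exact le_max_of_le_right (le_max_right _ _)
        · have ht1 : y₁ < t := lt_of_le_of_lt (le_max_left _ _) h2
          have ht0 : 0 ≤ t := le_of_lt (lt_of_le_of_lt (le_max_right y₁ 0) h2)
          calc f t ≤ C₁ * Real.exp (-s₁ * t) := hright t ht1
            _ ≤ C₁ * Real.exp (-c * |t|) := by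
                apply mul_le_mul_of_nonneg_left _ (Real.exp_pos _).le
                apply Real.exp_le_exp.2
                rw [abs_of_nonneg ht0]
                have : c ≤ s₁ := min_le_left _ _
                nlinarith
            _ ≤ _ := by
                apply mul_le_mul_of_nonneg_right _ (Real.exp_pos _).le
                exact le_max_left _ _
  -- x is integrable against μ
  obtain ⟨C, hCpos, hCb⟩ := hCbound
  have hxf : Integrable (fun x : ℝ => x * f x) volume := by
    have hmaj : Integrable (fun x : ℝ => (C * (2 / c)) * Real.exp (-(c/2) * |x|)) volume :=
      (exp_abs_integrable (by linarith : (0:ℝ) < c/2)).const_mul _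
    apply hmaj.mono' (continuous_id.mul hfc).aestronglyMeasurable
    apply Filter.Eventually.of_forall
    intro x
    simp only [Real.norm_eq_abs, Pi.mul_apply, id_eq, abs_mul, abs_of_pos (hfpos x), id]
    have h1 : f x ≤ C * Real.exp (-c * |x|) := hCb x
    have h2 : |x| ≤ 2 / c * Real.exp (c / 2 * |x|) := by
      have h4 : c / 2 * |x| ≤ Real.exp (c / 2 * |x|) := by
        linarith [Real.add_one_le_exp (c / 2 * |x|)]
      have h5 := mul_le_mul_of_nonneg_left h4 (by positivity : (0:ℝ) ≤ 2 / c)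
      have h6 : 2 / c * (c / 2 * |x|) = |x| := by field_simp
      linarith
    calc |x| * f x ≤ (2 / c * Real.exp (c / 2 * |x|)) * (C * Real.exp (-c * |x|)) := by
          apply mul_le_mul h2 h1 (hfpos x).le (by positivity)
      _ = 2 / c * C * Real.exp (c / 2 * |x| + -c * |x|) := by rw [Real.exp_add]; ring
      _ = C * (2 / c) * Real.exp (-(c / 2) * |x|) := by
          rw [show c / 2 * |x| + -c * |x| = -(c / 2) * |x| by ring]; ring
  have hid : Integrable (fun x : ℝ => x) μ := by
    rw [hμ, integrable_withDensity_iff hmeas (ae_of_all _ fun x => ENNReal.ofReal_lt_top)]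
    have heq2 : (fun x : ℝ => x * (ENNReal.ofReal (f x)).toReal) = fun x => x * f x := by
      funext x; rw [ENNReal.toReal_ofReal (hfpos x).le]
    rw [heq2]; exact hxf
  -- limits of F at ±∞
  have hFtop : Tendsto F atTop (𝓝 0) := by
    have h1 : Tendsto (fun t => μ (Set.Iic t)) atTop (𝓝 (μ Set.univ)) :=
      tendsto_measure_Iic_atTop μ
    rw [huniv] at h1
    have h2 : Tendsto (fun t => (μ (Set.Iic t)).toReal) atTop (𝓝 1) := by
      have h3 := (ENNReal.tendsto_toReal (by simp : (1:ENNReal) ≠ ⊤)).comp h1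
      simpa [Function.comp_def] using h3
    have h3 : F = fun t => 1 - (μ (Set.Iic t)).toReal := by
      funext t; have := hcompl t; simp only [hFdef]; linarith
    rw [h3]
    have h4 := h2.const_sub 1
    simpa using h4
  have hFbot : Tendsto F atBot (𝓝 1) := by
    have h1 : Tendsto (fun t : ℝ => μ (Set.Ici (t+1))) atBot (𝓝 1) := by
      have h2 : Tendsto (fun t : ℝ => t + 1) atBot atBot :=
        tendsto_atBot_add_const_right _ 1 tendsto_id
      have := (tendsto_measure_Ici_atBot μ).comp h2
      rw [huniv] at this
      exact this
    have h2 : Tendsto (fun t : ℝ => (μ (Set.Ici (t+1))).toReal) atBot (𝓝 1) := by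
      have h3 := (ENNReal.tendsto_toReal (by simp : (1:ENNReal) ≠ ⊤)).comp h1
      simpa [Function.comp_def] using h3
    apply tendsto_of_tendsto_of_tendsto_of_le_of_le h2 tendsto_const_nhds
    · intro t
      apply ENNReal.toReal_mono (hμfin _)
      exact measure_mono (fun x hx => lt_of_lt_of_le (by linarith : t < t + 1) hx)
    · exact fun t => hFle1 t
  -- the auxiliary antiderivative
  set ψ : ℝ → ℝ := fun x => F x * Real.log (F x) - F x with hψdef
  have hψderiv : ∀ x, HasDerivAt ψ (u x * f x) x := by
    intro x
    have h1 : HasDerivAt (fun y => F y * Real.log (F y))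
        (-(f x) * Real.log (F x) + F x * (-(f x) / F x)) x :=
      (hFderiv x).mul ((hFderiv x).log (hFpos x).ne')
    have h2 := h1.sub (hFderiv x)
    have h3 : -(f x) * Real.log (F x) + F x * (-(f x) / F x) - -(f x) = u x * f x := by
      simp only [hudef]
      rw [mul_comm (F x) _, div_mul_cancel₀ _ (hFpos x).ne']
      ring
    rw [h3] at h2
    exact h2
  have hGcont : Continuous (fun y : ℝ => -Real.negMulLog y - y) :=
    Real.continuous_negMulLog.neg.sub continuous_id
  have hψeq : ψ = (fun y : ℝ => -Real.negMulLog y - y) ∘ F := by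
    funext x
    simp only [hψdef, Function.comp, Real.negMulLog]
    ring
  have hψtop : Tendsto ψ atTop (𝓝 0) := by
    rw [hψeq]
    have h1 := (hGcont.tendsto 0).comp hFtop
    simpa [Real.negMulLog] using h1
  have hψbot : Tendsto ψ atBot (𝓝 (-1)) := by
    rw [hψeq]
    have h1 := (hGcont.tendsto 1).comp hFbot
    simpa [Real.negMulLog] using h1
  have hψnn : ∀ x, 0 ≤ u x * f x := fun x => mul_nonneg (hunonneg x) (hfpos x).le
  have hIoi_int : IntegrableOn (fun x => u x * f x) (Set.Ioi 0) volume :=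
    integrableOn_Ioi_deriv_of_nonneg' (fun x _ => hψderiv x) (fun x _ => hψnn x) hψtop
  have hIoi_val : ∫ x in Set.Ioi (0:ℝ), u x * f x = 0 - ψ 0 :=
    integral_Ioi_of_hasDerivAt_of_nonneg' (fun x _ => hψderiv x) (fun x _ => hψnn x) hψtop
  -- reflected part
  have hρderiv : ∀ x : ℝ, HasDerivAt (fun y => -ψ (-y)) (u (-x) * f (-x)) x := by
    intro x
    have h1 := ((hψderiv (-x)).comp x (hasDerivAt_neg x)).neg
    rw [show u (-x) * f (-x) = -(u (-x) * f (-x) * -1) by ring]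
    exact h1
  have hρtop : Tendsto (fun x : ℝ => -ψ (-x)) atTop (𝓝 1) := by
    have h1 := (hψbot.comp tendsto_neg_atTop_atBot).neg
    simpa [Function.comp] using h1
  have hIic_int' : IntegrableOn (fun x => u (-x) * f (-x)) (Set.Ioi 0) volume :=
    integrableOn_Ioi_deriv_of_nonneg' (fun x _ => hρderiv x) (fun x _ => hψnn (-x)) hρtop
  have hIic_val' : ∫ x in Set.Ioi (0:ℝ), u (-x) * f (-x) = 1 - (-ψ (-0)) :=
    integral_Ioi_of_hasDerivAt_of_nonneg' (fun x _ => hρderiv x) (fun x _ => hψnn (-x)) hρtop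
  have hIic_val : ∫ x in Set.Iic (0:ℝ), u x * f x = 1 + ψ 0 := by
    have h1 : ∫ x in Set.Ioi (0:ℝ), u (-x) * f (-x) = ∫ x in Set.Iic (-(0:ℝ)), u x * f x :=
      integral_comp_neg_Ioi 0 (fun x => u x * f x)
    rw [h1] at hIic_val'
    simp only [neg_zero] at hIic_val'
    linarith [hIic_val']
  have hIic_int : IntegrableOn (fun x => u x * f x) (Set.Iic 0) volume := by
    have h2 := (MeasurePreserving.integrableOn_comp_preimage
      (Measure.measurePreserving_neg (volume : Measure ℝ))
      (Homeomorph.neg ℝ).measurableEmbedding (f := fun x => u x * f x)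
      (s := Set.Iic (0:ℝ))).1
    have hpre : (fun x : ℝ => -x) ⁻¹' Set.Iic (0:ℝ) = Set.Ici (0:ℝ) := by
      ext x; simp
    have h3 : IntegrableOn ((fun x => u x * f x) ∘ (fun x : ℝ => -x)) (Set.Ici (0:ℝ))
        volume := by
      rw [integrableOn_Ici_iff_integrableOn_Ioi]
      exact hIic_int'.congr_fun (fun x _ => by simp [Function.comp]) measurableSet_Ioi
    rw [← hpre] at h3
    exact h2 h3
  have hw_int : Integrable (fun x => u x * f x) volume := by
    rw [← integrableOn_univ, ← Set.Iic_union_Ioi (a := (0:ℝ)), integrableOn_union]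
    exact ⟨hIic_int, hIoi_int⟩
  have htotal : ∫ x, u x * f x = 1 := by
    rw [← intervalIntegral.integral_Iic_add_Ioi hIic_int hIoi_int] -- might be wrong namespace
    rw [hIic_val, hIoi_val]
    ring
  -- integral of u with respect to μ
  have hu_int_mu : Integrable u μ := by
    rw [hμ, integrable_withDensity_iff hmeas (ae_of_all _ fun x => ENNReal.ofReal_lt_top)]
    have heq3 : (fun x => u x * (ENNReal.ofReal (f x)).toReal) = fun x => u x * f x := by
      funext x; rw [ENNReal.toReal_ofReal (hfpos x).le]
    rw [heq3]; exact hw_int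
  have hu_val : ∫ x, u x ∂μ = 1 := by
    rw [hμ]
    rw [show (fun x => ENNReal.ofReal (f x)) = (fun x => ((Real.toNNReal (f x) : NNReal) : ENNReal)) from rfl]
    rw [integral_withDensity_eq_integral_smul (by fun_prop : Measurable fun x => Real.toNNReal (f x)) u]
    rw [← htotal]
    congr 1
    funext x
    rw [NNReal.smul_def, smul_eq_mul, Real.coe_toNNReal _ (hfpos x).le, mul_comm]
  -- Jensen's inequality : u (Eμ) ≤ 1
  have hjensen : u Eμ ≤ 1 := by
    rw [hE, ← hu_val]
    exact huconv.map_integral_le hucont.continuousOn isClosed_univ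
      (ae_of_all _ fun x => Set.mem_univ x) hid hu_int_mu
  -- endpoints
  have hn : 0 < n := lt_trans (lt_trans ha hab) hbn
  have han : a < n := lt_trans hab hbn
  have hb : 0 < b := lt_trans ha hab
  have hIa : (1 - a/n) ∈ Set.Ioo (0:ℝ) 1 := by
    constructor
    · have : a/n < 1 := (div_lt_one hn).2 han
      linarith
    · have : 0 < a/n := div_pos ha hn
      linarith
  have hIb : (1 - b/n) ∈ Set.Ioo (0:ℝ) 1 := by
    constructor
    · have : b/n < 1 := (div_lt_one hn).2 hbn
      linarith
    · have : 0 < b/n := div_pos hb hn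
      linarith
  set t1 : ℝ := Jinv (1 - a/n) with ht1def
  set t2 : ℝ := Jinv (1 - b/n) with ht2def
  have hFt1 : F t1 = a / n := by
    have h1 := hJinv _ hIa
    rw [hJF] at h1
    linarith
  have hFt2 : F t2 = b / n := by
    have h1 := hJinv _ hIb
    rw [hJF] at h1
    linarith
  have hut1 : u t1 = Real.log n - Real.log a := by
    simp only [hudef]
    rw [hFt1, Real.log_div ha.ne' hn.ne']
    ring
  have hut2 : u t2 = Real.log n - Real.log b := by
    simp only [hudef]
    rw [hFt2, Real.log_div hb.ne' hn.ne']
    ring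
  have humono : StrictMono u := by
    intro s t hst
    simp only [hudef]
    exact neg_lt_neg (Real.log_lt_log (hFpos t) (hFanti hst))
  have hEt2 : Eμ < t2 := by
    by_contra hcon
    push_neg at hcon
    have h1 : u t2 ≤ u Eμ := humono.monotone hcon
    rw [hut2] at h1
    linarith
  have ht12 : t2 < t1 := by
    by_contra hcon
    push_neg at hcon
    have h1 : u t1 ≤ u t2 := humono.monotone hcon
    rw [hut1, hut2] at h1
    have h2 : Real.log a < Real.log b := Real.log_lt_log ha hab
    linarith
  -- mean value theorem
  obtain ⟨c₁, hc₁mem, hc₁⟩ := exists_hasDerivAt_eq_slope u (fun t => f t / F t) ht12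
    hucont.continuousOn (fun x _ => huderiv x)
  obtain ⟨c₂, hc₂mem, hc₂⟩ := exists_hasDerivAt_eq_slope u (fun t => f t / F t) hEt2
    hucont.continuousOn (fun x _ => huderiv x)
  have hslope_le : (u t2 - u Eμ) / (t2 - Eμ) ≤ (u t1 - u t2) / (t1 - t2) := by
    rw [← hc₁, ← hc₂]
    exact hhaz c₂ c₁ (le_of_lt (lt_trans hc₂mem.2 hc₁mem.1))
  have hd1 : 0 < t1 - t2 := by linarith
  have hd2 : 0 < t2 - Eμ := by linarith
  have hnum : u t1 - u t2 = Real.log b - Real.log a := by rw [hut1, hut2]; ring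
  have hnumpos : 0 ≤ Real.log b - Real.log a := by
    have := Real.log_lt_log ha hab
    linarith
  have hden : Real.log n - Real.log b - 1 ≤ u t2 - u Eμ := by
    rw [hut2]; linarith
  have hdenpos : 0 < u t2 - u Eμ := lt_of_lt_of_le hlog hden
  have step1 : (t1 - t2) / (t2 - Eμ) ≤ (u t1 - u t2) / (u t2 - u Eμ) := by
    rw [div_le_div_iff₀ hd2 hdenpos]
    rw [div_le_div_iff₀ hd2 hd1] at hslope_le
    nlinarith
  calc (t1 - t2) / (t2 - Eμ) ≤ (u t1 - u t2) / (u t2 - u Eμ) := step1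
    _ = (Real.log b - Real.log a) / (u t2 - u Eμ) := by rw [hnum]
    _ ≤ (Real.log b - Real.log a) / (Real.log n - Real.log b - 1) := by
        exact div_le_div_of_nonneg_left hnumpos hlog hden
end

section
/- Let μ be a probability measure on ℝ whose density is log-concave, and let H be a closed half-line [m, ∞) where m is the mean of μ. Then μ(H) ≥ e^{-1}. -/
open MeasureTheory Set


lemma four_point {g : ℝ → ℝ} (hg : ConvexOn ℝ Set.univ g) {a b c d : ℝ}
    (hac : a ≤ c) (had : a ≤ d) (hsum : c + d = a + b) :
    g c + g d ≤ g a + g b := by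
  rcases eq_or_lt_of_le (le_trans had (by linarith : d ≤ b)) with hab | hab
  · have : a = b := hab
    have hc : c = a := by linarith [le_trans hac (show c ≤ b by linarith)]
    have hd : d = a := by linarith
    rw [hc, hd, this]
  · set θ : ℝ := (b - c) / (b - a) with hθ
    have hba : (0:ℝ) < b - a := by linarith
    have hθb : θ * (b - a) = b - c := div_mul_cancel₀ _ hba.ne'
    have hθ0 : 0 ≤ θ := div_nonneg (by linarith) hba.le
    have hθ1 : θ ≤ 1 := (div_le_one hba).2 (by linarith)
    have h1 : θ * a + (1 - θ) * b = c := by linear_combination -hθb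
    have h2 : (1 - θ) * a + θ * b = d := by linear_combination hθb - hsum
    have e1 : g (θ * a + (1 - θ) * b) ≤ θ * g a + (1 - θ) * g b := by
      have := hg.2 (mem_univ a) (mem_univ b) hθ0 (by linarith : (0:ℝ) ≤ 1 - θ)
        (by ring : θ + (1 - θ) = 1)
      simpa using this
    have e2 : g ((1 - θ) * a + θ * b) ≤ (1 - θ) * g a + θ * g b := by
      have := hg.2 (mem_univ a) (mem_univ b) (by linarith : (0:ℝ) ≤ 1 - θ) hθ0
        (by ring : (1 - θ) + θ = 1)
      simpa using this
    rw [h1] at e1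
    rw [h2] at e2
    linarith

lemma f_cont {f g : ℝ → ℝ} (hg : ConvexOn ℝ Set.univ g)
    (hf : ∀ t, f t = Real.exp (-g t)) : Continuous f := by
  have hgc : Continuous g := by
    rw [← continuousOn_univ]
    exact hg.continuousOn isOpen_univ
  have : f = fun t => Real.exp (-g t) := funext hf
  rw [this]
  exact Real.continuous_exp.comp hgc.neg

lemma f_pos {f g : ℝ → ℝ} (hf : ∀ t, f t = Real.exp (-g t)) : ∀ t, 0 < f t :=
  fun t => by rw [hf t]; exact Real.exp_pos _

lemma key_right {f g : ℝ → ℝ} (hg : ConvexOn ℝ Set.univ g)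
    (hf : ∀ t, f t = Real.exp (-g t)) {s t y : ℝ} (hst : s ≤ t) (hsy : s ≤ y) :
    f s * f (y + (t - s)) ≤ f t * f y := by
  rw [hf, hf, hf, hf, ← Real.exp_add, ← Real.exp_add]
  apply Real.exp_le_exp.2
  have := four_point hg (a := s) (b := y + (t - s)) (c := t) (d := y) hst hsy (by ring)
  linarith

lemma key_left {f g : ℝ → ℝ} (hg : ConvexOn ℝ Set.univ g)
    (hf : ∀ t, f t = Real.exp (-g t)) {s t y : ℝ} (hst : s ≤ t) (hys : y ≤ s) :
    f t * f y ≤ f s * f (y + (t - s)) := by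
  rw [hf, hf, hf, hf, ← Real.exp_add, ← Real.exp_add]
  apply Real.exp_le_exp.2
  have := four_point hg (a := y) (b := t) (c := s) (d := y + (t - s)) hys (by linarith) (by ring)
  linarith

lemma translate_Ici (f : ℝ → ℝ) (s c : ℝ) :
    ∫ x in Ici (s + c), f x = ∫ y in Ici s, f (y + c) := by
  have h := (measurePreserving_add_right volume c).setIntegral_preimage_emb
    (measurableEmbedding_addRight c) f (Ici (s + c))
  rw [← h]
  congr 1
  ext y
  simp

lemma translate_Iic (f : ℝ → ℝ) (s c : ℝ) :
    ∫ x in Iic (s + c), f x = ∫ y in Iic s, f (y + c) := by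
  have h := (measurePreserving_add_right volume c).setIntegral_preimage_emb
    (measurableEmbedding_addRight c) f (Iic (s + c))
  rw [← h]
  congr 1
  ext y
  simp

noncomputable def Gfun (f : ℝ → ℝ) (t : ℝ) : ℝ := ∫ x in Ici t, f x
noncomputable def Hfun (f : ℝ → ℝ) (t : ℝ) : ℝ := ∫ x in Iic t, f x

lemma G_pos {f : ℝ → ℝ} (hpos : ∀ t, 0 < f t) (hint : Integrable f volume) (t : ℝ) :
    0 < Gfun f t := by
  rw [Gfun, MeasureTheory.setIntegral_pos_iff_support_of_nonneg_ae
    (Filter.Eventually.of_forall (fun x => (hpos x).le)) hint.integrableOn]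
  have : Function.support f = univ := by
    ext x; simp [Function.mem_support, (hpos x).ne']
  rw [this, univ_inter]
  simp [Real.volume_Ici]

lemma H_pos {f : ℝ → ℝ} (hpos : ∀ t, 0 < f t) (hint : Integrable f volume) (t : ℝ) :
    0 < Hfun f t := by
  rw [Hfun, MeasureTheory.setIntegral_pos_iff_support_of_nonneg_ae
    (Filter.Eventually.of_forall (fun x => (hpos x).le)) hint.integrableOn]
  have : Function.support f = univ := by
    ext x; simp [Function.mem_support, (hpos x).ne']
  rw [this, univ_inter]
  simp [Real.volume_Iic]

lemma ratio_mono_G {f g : ℝ → ℝ} (hg : ConvexOn ℝ Set.univ g)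
    (hfe : ∀ t, f t = Real.exp (-g t)) (hint : Integrable f volume)
    {s t : ℝ} (hst : s ≤ t) : f s * Gfun f t ≤ f t * Gfun f s := by
  have hshift : Integrable (fun y => f (y + (t - s))) volume :=
    hint.comp_add_right (t - s)
  have h1 : Gfun f t = ∫ y in Ici s, f (y + (t - s)) := by
    have h := translate_Ici f s (t - s)
    rw [show s + (t - s) = t by ring] at h
    rw [Gfun, h]
  rw [h1, Gfun, ← integral_const_mul, ← integral_const_mul]
  apply setIntegral_mono_on
  · exact (hshift.const_mul _).integrableOn
  · exact (hint.const_mul _).integrableOn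
  · exact measurableSet_Ici
  · intro y hy
    exact key_right hg hfe hst (mem_Ici.1 hy)

lemma ratio_mono_H {f g : ℝ → ℝ} (hg : ConvexOn ℝ Set.univ g)
    (hfe : ∀ t, f t = Real.exp (-g t)) (hint : Integrable f volume)
    {s t : ℝ} (hst : s ≤ t) : f t * Hfun f s ≤ f s * Hfun f t := by
  have hshift : Integrable (fun y => f (y + (t - s))) volume :=
    hint.comp_add_right (t - s)
  have h1 : Hfun f t = ∫ y in Iic s, f (y + (t - s)) := by
    have h := translate_Iic f s (t - s)
    rw [show s + (t - s) = t by ring] at h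
    rw [Hfun, h]
  rw [h1, Hfun, ← integral_const_mul, ← integral_const_mul]
  apply setIntegral_mono_on
  · exact (hint.const_mul _).integrableOn
  · exact (hshift.const_mul _).integrableOn
  · exact measurableSet_Iic
  · intro y hy
    exact key_left hg hfe hst (mem_Iic.1 hy)

lemma H_deriv {f : ℝ → ℝ} (hcont : Continuous f) (hint : Integrable f volume) (t : ℝ) :
    HasDerivAt (Hfun f) (f t) t := by
  have heq : ∀ u, Hfun f u = Hfun f 0 + ∫ x in (0:ℝ)..u, f x := by
    intro u
    rw [Hfun, Hfun, ← intervalIntegral.integral_Iic_sub_Iic hint.integrableOn hint.integrableOn]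
    ring
  have : HasDerivAt (fun u => Hfun f 0 + ∫ x in (0:ℝ)..u, f x) (f t) t := by
    apply HasDerivAt.const_add
    exact intervalIntegral.integral_hasDerivAt_right (hcont.intervalIntegrable _ _)
      (hcont.stronglyMeasurableAtFilter _ _) hcont.continuousAt
  exact this.congr_of_eventuallyEq (Filter.Eventually.of_forall heq)

lemma G_eq_sub {f : ℝ → ℝ} (hint : Integrable f volume) (t : ℝ) :
    Gfun f t = (∫ x, f x) - Hfun f t := by
  have h := intervalIntegral.integral_Iic_add_Ioi (b := t) (μ := volume)
    hint.integrableOn hint.integrableOn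
  rw [Gfun, integral_Ici_eq_integral_Ioi, Hfun]
  linarith

lemma G_deriv {f : ℝ → ℝ} (hcont : Continuous f) (hint : Integrable f volume) (t : ℝ) :
    HasDerivAt (Gfun f) (-(f t)) t := by
  have : Gfun f = fun u => (∫ x, f x) - Hfun f u := funext (G_eq_sub hint)
  rw [this]
  simpa using (H_deriv hcont hint t).const_sub (∫ x, f x)

lemma tail_G {f g : ℝ → ℝ} (hg : ConvexOn ℝ Set.univ g)
    (hfe : ∀ t, f t = Real.exp (-g t)) (hcont : Continuous f)
    (hpos : ∀ t, 0 < f t) (hint : Integrable f volume) (m t : ℝ) :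
    Gfun f t ≤ Gfun f m * Real.exp (-(f m / Gfun f m) * (t - m)) := by
  set p := Gfun f m with hp
  have hp0 : 0 < p := G_pos hpos hint m
  set c : ℝ := f m / p with hc
  set ψ : ℝ → ℝ := fun u => Gfun f u * Real.exp (c * (u - m)) with hψ
  have hψd : ∀ u, HasDerivAt ψ (Real.exp (c * (u - m)) * (c * Gfun f u - f u)) u := by
    intro u
    have h1 : HasDerivAt (fun u => Real.exp (c * (u - m))) (c * Real.exp (c * (u - m))) u := by
      have h0 : HasDerivAt (fun u : ℝ => c * (u - m)) c u := by
        simpa using ((hasDerivAt_id u).sub_const m).const_mul c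
      simpa [mul_comm] using h0.exp
    have := (G_deriv hcont hint u).mul h1
    convert this using 1
    iterate 3 rfl
    ring
  have hψc : Continuous ψ := by
    have : Differentiable ℝ ψ := fun u => (hψd u).differentiableAt
    exact this.continuous
  have hkey : ∀ u, ψ u ≤ ψ m := by
    intro u
    rcases le_total u m with hu | hu
    · -- monotone on Iic m
      have hmono : MonotoneOn ψ (Iic m) := by
        apply monotoneOn_of_deriv_nonneg (convex_Iic m) hψc.continuousOn
        · intro x hx
          exact (hψd x).differentiableAt.differentiableWithinAt
        · intro x hx
          rw [interior_Iic] at hx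
          rw [(hψd x).deriv]
          have hratio := ratio_mono_G hg hfe hint (le_of_lt hx)
          have : c * Gfun f x - f x ≥ 0 := by
            rw [hc]
            rw [div_mul_eq_mul_div, ge_iff_le, sub_nonneg, le_div_iff₀ hp0]
            linarith [hratio]
          positivity
      exact hmono hu (le_refl m : m ∈ Iic m) hu
    · have hanti : AntitoneOn ψ (Ici m) := by
        apply antitoneOn_of_deriv_nonpos (convex_Ici m) hψc.continuousOn
        · intro x hx
          exact (hψd x).differentiableAt.differentiableWithinAt
        · intro x hx
          rw [interior_Ici] at hx
          rw [(hψd x).deriv]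
          have hratio := ratio_mono_G hg hfe hint (le_of_lt hx)
          have h2 : c * Gfun f x - f x ≤ 0 := by
            rw [hc, div_mul_eq_mul_div, sub_nonpos, div_le_iff₀ hp0]
            linarith [hratio]
          have h3 : (0:ℝ) < Real.exp (c * (x - m)) := Real.exp_pos _
          nlinarith
      exact hanti (le_refl m : m ∈ Ici m) hu hu
  have h : Gfun f t * Real.exp (c * (t - m)) ≤ p := by
    have h := hkey t
    have hψm : ψ m = p := by simp [hψ, hp]
    rw [hψm] at h
    exact h
  have hE : (0:ℝ) < Real.exp (c * (t - m)) := Real.exp_pos _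
  have h2 : Gfun f t ≤ p / Real.exp (c * (t - m)) := (le_div_iff₀ hE).2 h
  rw [div_eq_mul_inv, ← Real.exp_neg] at h2
  calc Gfun f t ≤ p * Real.exp (-(c * (t - m))) := h2
    _ = p * Real.exp (-c * (t - m)) := by ring_nf
  
lemma tail_H {f g : ℝ → ℝ} (hg : ConvexOn ℝ Set.univ g)
    (hfe : ∀ t, f t = Real.exp (-g t)) (hcont : Continuous f)
    (hpos : ∀ t, 0 < f t) (hint : Integrable f volume) (m : ℝ) {t : ℝ} (ht : t ≤ m) :
    Hfun f t ≤ Hfun f m * Real.exp ((f m / Hfun f m) * (t - m)) := by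
  set q := Hfun f m with hq
  have hq0 : 0 < q := H_pos hpos hint m
  set c : ℝ := f m / q with hc
  set χ : ℝ → ℝ := fun u => Hfun f u * Real.exp (-c * (u - m)) with hχ
  have hχd : ∀ u, HasDerivAt χ (Real.exp (-c * (u - m)) * (f u - c * Hfun f u)) u := by
    intro u
    have h1 : HasDerivAt (fun u => Real.exp (-c * (u - m))) (-c * Real.exp (-c * (u - m))) u := by
      have h0 : HasDerivAt (fun u : ℝ => -c * (u - m)) (-c) u := by
        simpa using ((hasDerivAt_id u).sub_const m).const_mul (-c)
      simpa [mul_comm] using h0.exp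
    have := (H_deriv hcont hint u).mul h1
    convert this using 1
    iterate 3 rfl
    ring
  have hχc : Continuous χ := by
    have : Differentiable ℝ χ := fun u => (hχd u).differentiableAt
    exact this.continuous
  have hmono : MonotoneOn χ (Iic m) := by
    apply monotoneOn_of_deriv_nonneg (convex_Iic m) hχc.continuousOn
    · intro x hx
      exact (hχd x).differentiableAt.differentiableWithinAt
    · intro x hx
      rw [interior_Iic] at hx
      rw [(hχd x).deriv]
      have hratio := ratio_mono_H hg hfe hint (le_of_lt hx)
      have : f x - c * Hfun f x ≥ 0 := by
        rw [hc, div_mul_eq_mul_div, ge_iff_le, sub_nonneg, div_le_iff₀ hq0]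
        linarith [hratio]
      positivity
  have h : Hfun f t * Real.exp (-c * (t - m)) ≤ q := by
    have h := hmono (mem_Iic.2 ht) (le_refl m : m ∈ Iic m) ht
    have hχm : χ m = q := by simp [hχ, hq]
    rw [hχm] at h
    exact h
  have hE : (0:ℝ) < Real.exp (-c * (t - m)) := Real.exp_pos _
  have h2 : Hfun f t ≤ q / Real.exp (-c * (t - m)) := (le_div_iff₀ hE).2 h
  rw [div_eq_mul_inv, ← Real.exp_neg] at h2
  calc Hfun f t ≤ q * Real.exp (-(-c * (t - m))) := h2
    _ = q * Real.exp (c * (t - m)) := by ring_nf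

lemma not_all_ge {f g : ℝ → ℝ} (hfe : ∀ t, f t = Real.exp (-g t))
    (hint : Integrable f volume) (N : ℝ) (hmono : ∀ ⦃u v : ℝ⦄, N ≤ u → u ≤ v → g v ≤ g u) :
    False := by
  -- then f ≥ exp (-g N) on Ici N, not integrable
  have hb : ∀ x ∈ Ici N, Real.exp (-g N) ≤ f x := by
    intro x hx
    rw [hfe]
    exact Real.exp_le_exp.2 (neg_le_neg (hmono le_rfl (mem_Ici.1 hx)))
  have hconst : IntegrableOn (fun _ : ℝ => Real.exp (-g N)) (Ici N) volume := by
    apply Integrable.mono hint.integrableOn aestronglyMeasurable_const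
    apply (ae_restrict_iff' measurableSet_Ici).2
    apply Filter.Eventually.of_forall
    intro x hx
    rw [Real.norm_eq_abs, Real.norm_eq_abs, abs_of_pos (Real.exp_pos _), abs_of_pos]
    · exact hb x hx
    · exact lt_of_lt_of_le (Real.exp_pos _) (hb x hx)
  rw [integrableOn_const_iff] at hconst
  rcases hconst with h | h
  · exact absurd h (by simp)
  · rw [Real.volume_Ici] at h
    exact absurd h (lt_irrefl _)

lemma exp_bound_right {f g : ℝ → ℝ} (hg : ConvexOn ℝ Set.univ g)
    (hfe : ∀ t, f t = Real.exp (-g t)) (hint : Integrable f volume) (m : ℝ) :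
    ∃ v c : ℝ, m ≤ v ∧ 0 < c ∧ ∀ t, v ≤ t → f t ≤ f v * Real.exp (-c * (t - v)) := by
  by_cases hyp : ∀ ⦃u v : ℝ⦄, m ≤ u → u ≤ v → g v ≤ g u
  · exact absurd (not_all_ge hfe hint m hyp) not_false
  · push_neg at hyp
    obtain ⟨u, v, hmu, huv, hguv⟩ := hyp
    have huv' : u < v := lt_of_le_of_ne huv (fun h => by rw [h] at hguv; exact lt_irrefl _ hguv)
    set c : ℝ := (g v - g u) / (v - u) with hc
    have hc0 : 0 < c := div_pos (by linarith) (by linarith)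
    refine ⟨v, c, le_trans hmu huv, hc0, ?_⟩
    intro t htv
    rcases eq_or_lt_of_le htv with rfl | htv'
    · simp
    have hslope := hg.slope_mono_adjacent (mem_univ u) (mem_univ t) huv' htv'
    -- (g v - g u)/(v-u) ≤ (g t - g v)/(t - v)
    have h1 : c * (t - v) ≤ g t - g v := by
      rw [hc]
      calc (g v - g u) / (v - u) * (t - v) ≤ (g t - g v) / (t - v) * (t - v) := by
            apply mul_le_mul_of_nonneg_right hslope (by linarith)
        _ = g t - g v := div_mul_cancel₀ _ (by linarith)
    rw [hfe, hfe, ← Real.exp_add]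
    apply Real.exp_le_exp.2
    linarith

lemma exp_bound_left {f g : ℝ → ℝ} (hg : ConvexOn ℝ Set.univ g)
    (hfe : ∀ t, f t = Real.exp (-g t)) (hint : Integrable f volume) (m : ℝ) :
    ∃ w d : ℝ, w ≤ m ∧ 0 < d ∧ ∀ t, t ≤ w → f t ≤ f w * Real.exp (-d * (w - t)) := by
  by_cases hyp : ∀ ⦃u v : ℝ⦄, u ≤ v → v ≤ m → g u ≤ g v
  · exfalso
    -- f ≥ exp (-g m) on Iic m
    have hb : ∀ x ∈ Iic m, Real.exp (-g m) ≤ f x := by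
      intro x hx
      rw [hfe]
      exact Real.exp_le_exp.2 (neg_le_neg (hyp (mem_Iic.1 hx) le_rfl))
    have hconst : IntegrableOn (fun _ : ℝ => Real.exp (-g m)) (Iic m) volume := by
      apply Integrable.mono hint.integrableOn aestronglyMeasurable_const
      apply (ae_restrict_iff' measurableSet_Iic).2
      apply Filter.Eventually.of_forall
      intro x hx
      rw [Real.norm_eq_abs, Real.norm_eq_abs, abs_of_pos (Real.exp_pos _), abs_of_pos]
      · exact hb x hx
      · exact lt_of_lt_of_le (Real.exp_pos _) (hb x hx)
    rw [integrableOn_const_iff] at hconst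
    rcases hconst with h | h
    · exact absurd h (by simp)
    · rw [Real.volume_Iic] at h
      exact absurd h (lt_irrefl _)
  · push_neg at hyp
    obtain ⟨u, v, huv, hvm, hguv⟩ := hyp
    have huv' : u < v := lt_of_le_of_ne huv (fun h => by rw [h] at hguv; exact lt_irrefl _ hguv)
    set d : ℝ := (g u - g v) / (v - u) with hd
    have hd0 : 0 < d := div_pos (by linarith) (by linarith)
    refine ⟨u, d, le_trans huv hvm, hd0, ?_⟩
    intro t htu
    rcases eq_or_lt_of_le htu with rfl | htu'
    · simp
    have hslope := hg.slope_mono_adjacent (mem_univ t) (mem_univ v) htu' huv'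
    -- (g u - g t)/(u - t) ≤ (g v - g u)/(v - u) = -d
    have h1 : d * (u - t) ≤ g t - g u := by
      have h2 : (g u - g t) / (u - t) ≤ -d := by
        rw [hd]
        calc (g u - g t) / (u - t) ≤ (g v - g u) / (v - u) := hslope
          _ = -((g u - g v) / (v - u)) := by ring
      have h3 : (g u - g t) / (u - t) * (u - t) ≥ -d * (u - t) → True := fun _ => trivial
      have h4 : (g u - g t) = (g u - g t) / (u - t) * (u - t) :=
        (div_mul_cancel₀ _ (by linarith : u - t ≠ 0)).symm
      nlinarith [mul_le_mul_of_nonneg_right h2 (by linarith : (0:ℝ) ≤ u - t)]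
    rw [hfe, hfe, ← Real.exp_add]
    apply Real.exp_le_exp.2
    linarith

lemma integrableOn_exp_mul_Iic' (a c : ℝ) (ha : 0 < a) :
    IntegrableOn (fun x => Real.exp (a * x)) (Iic c) volume := by
  have h : IntegrableOn (fun x => Real.exp (-(a * x))) (Ioi (-c)) volume := by
    simpa [neg_mul] using exp_neg_integrableOn_Ioi (-c) ha
  have h2 : Integrable ((Ioi (-c)).indicator fun x => Real.exp (-(a * x))) volume :=
    (integrable_indicator_iff measurableSet_Ioi).2 h
  have h3 := h2.comp_neg
  have h4 : (fun x => ((Ioi (-c)).indicator fun y => Real.exp (-(a * y))) (-x))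
      = (Iio c).indicator fun x => Real.exp (a * x) := by
    funext x
    by_cases hx : x < c
    · rw [indicator_of_mem (by simpa using hx : -x ∈ Ioi (-c)),
        indicator_of_mem (mem_Iio.2 hx)]
      ring_nf
    · rw [indicator_of_notMem (by simpa using hx), indicator_of_notMem (by simpa using hx)]
  rw [h4] at h3
  have h5 := (integrable_indicator_iff measurableSet_Iio).1 h3
  exact (integrableOn_Iic_iff_integrableOn_Iio).2 h5

lemma u_le_exp_u (u : ℝ) : u ≤ Real.exp u :=
  le_trans (by linarith) (Real.add_one_le_exp u)

lemma integrable_xf {f g : ℝ → ℝ} (hg : ConvexOn ℝ Set.univ g)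
    (hfe : ∀ t, f t = Real.exp (-g t)) (hcont : Continuous f)
    (hpos : ∀ t, 0 < f t) (hint : Integrable f volume) (m : ℝ) :
    Integrable (fun x => (x - m) * f x) volume := by
  obtain ⟨v, c, hmv, hc0, hvbd⟩ := exp_bound_right hg hfe hint m
  obtain ⟨w, d, hwm, hd0, hwbd⟩ := exp_bound_left hg hfe hint m
  have hmeas : AEStronglyMeasurable (fun x => (x - m) * f x) volume :=
    (((continuous_id.sub continuous_const).mul hcont)).aestronglyMeasurable
  have hwv : w ≤ v := le_trans hwm hmv
  -- right piece
  have hright : IntegrableOn (fun x => (x - m) * f x) (Ici v) volume := by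
    set B : ℝ := (2 / c + (v - m)) * f v with hB
    have hB0 : 0 ≤ B := by
      have := (hpos v).le
      have h2c : (0:ℝ) ≤ 2 / c := by positivity
      nlinarith [sub_nonneg.2 hmv]
    have hdom0 : IntegrableOn (fun x => Real.exp (-(c / 2) * (x - v))) (Ici v) volume := by
      rw [integrableOn_Ici_iff_integrableOn_Ioi]
      have h := (exp_neg_integrableOn_Ioi v (by positivity : (0:ℝ) < c / 2)).const_mul
        (Real.exp ((c / 2) * v))
      exact h.congr (Filter.Eventually.of_forall (fun x => by
        show Real.exp (c / 2 * v) * Real.exp (-(c / 2) * x) = Real.exp (-(c / 2) * (x - v))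
        rw [← Real.exp_add]; ring_nf))
    have hdom : IntegrableOn (fun x => B * Real.exp (-(c / 2) * (x - v))) (Ici v) volume :=
      hdom0.const_mul B
    apply Integrable.mono hdom hmeas.restrict
    apply (ae_restrict_iff' measurableSet_Ici).2
    apply Filter.Eventually.of_forall
    intro x hx
    have hxv : v ≤ x := mem_Ici.1 hx
    have hxm : m ≤ x := le_trans hmv hxv
    have hfx : 0 < f x := hpos x
    rw [Real.norm_eq_abs, Real.norm_eq_abs, abs_of_nonneg (by nlinarith : 0 ≤ (x - m) * f x)]
    have hE : (0:ℝ) < Real.exp ((c/2) * (x - v)) := Real.exp_pos _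
    have h1 : x - v ≤ (2 / c) * Real.exp ((c/2) * (x - v)) := by
      have := u_le_exp_u ((c/2) * (x - v))
      calc x - v = (2/c) * ((c/2) * (x - v)) := by field_simp
        _ ≤ (2/c) * Real.exp ((c/2) * (x - v)) := by
            apply mul_le_mul_of_nonneg_left this (by positivity)
    have h2 : v - m ≤ (v - m) * Real.exp ((c/2) * (x - v)) := by
      nlinarith [Real.one_le_exp (mul_nonneg (by positivity) (by linarith : (0:ℝ) ≤ x - v) :
        (0:ℝ) ≤ (c/2) * (x - v)), sub_nonneg.2 hmv]
    have h3 : f x ≤ f v * Real.exp (-c * (x - v)) := hvbd x hxv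
    have h4 : (x - m) * f x ≤ ((2/c) + (v - m)) * Real.exp ((c/2) * (x - v)) *
        (f v * Real.exp (-c * (x - v))) := by
      have hxm' : x - m = (x - v) + (v - m) := by ring
      have hub : x - m ≤ ((2/c) + (v - m)) * Real.exp ((c/2) * (x - v)) := by
        rw [hxm']
        calc (x - v) + (v - m) ≤ (2/c) * Real.exp ((c/2)*(x-v)) + (v-m) * Real.exp ((c/2)*(x-v)) :=
              add_le_add h1 h2
          _ = ((2/c) + (v - m)) * Real.exp ((c/2) * (x - v)) := by ring
      exact mul_le_mul hub h3 hfx.le (le_trans (sub_nonneg.2 hxm) hub)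
    have hEE : Real.exp ((c/2) * (x - v)) * Real.exp (-c * (x - v))
        = Real.exp (-(c/2) * (x - v)) := by
      rw [← Real.exp_add]; ring_nf
    have h5 : ((2/c) + (v - m)) * Real.exp ((c/2) * (x - v)) * (f v * Real.exp (-c * (x - v)))
        = B * Real.exp (-(c/2) * (x - v)) := by
      rw [hB, ← hEE]; ring
    rw [abs_of_nonneg (by positivity : (0:ℝ) ≤ B * Real.exp (-(c/2)*(x-v)))]
    rw [h5] at h4
    exact h4
  -- left piece
  have hleft : IntegrableOn (fun x => (x - m) * f x) (Iic w) volume := by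
    set B : ℝ := (2 / d + (m - w)) * f w with hB
    have hB0 : 0 ≤ B := by
      have := (hpos w).le
      have h2d : (0:ℝ) ≤ 2 / d := by positivity
      nlinarith [sub_nonneg.2 hwm]
    have hdom0 : IntegrableOn (fun x => Real.exp (-(d / 2) * (w - x))) (Iic w) volume := by
      have h := (integrableOn_exp_mul_Iic' (d / 2) w (by positivity)).const_mul
        (Real.exp (-(d / 2) * w))
      exact h.congr (Filter.Eventually.of_forall (fun x => by
        show Real.exp (-(d/2) * w) * Real.exp (d/2 * x) = Real.exp (-(d / 2) * (w - x))
        rw [← Real.exp_add]; ring_nf))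
    have hdom : IntegrableOn (fun x => B * Real.exp (-(d / 2) * (w - x))) (Iic w) volume :=
      hdom0.const_mul B
    apply Integrable.mono hdom hmeas.restrict
    apply (ae_restrict_iff' measurableSet_Iic).2
    apply Filter.Eventually.of_forall
    intro x hx
    have hxw : x ≤ w := mem_Iic.1 hx
    have hxm : x ≤ m := le_trans hxw hwm
    have hfx : 0 < f x := hpos x
    rw [Real.norm_eq_abs, Real.norm_eq_abs,
      abs_of_nonpos (by nlinarith : (x - m) * f x ≤ 0)]
    have h1 : w - x ≤ (2 / d) * Real.exp ((d/2) * (w - x)) := by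
      have := u_le_exp_u ((d/2) * (w - x))
      calc w - x = (2/d) * ((d/2) * (w - x)) := by field_simp
        _ ≤ (2/d) * Real.exp ((d/2) * (w - x)) := by
            apply mul_le_mul_of_nonneg_left this (by positivity)
    have h2 : m - w ≤ (m - w) * Real.exp ((d/2) * (w - x)) := by
      nlinarith [Real.one_le_exp (mul_nonneg (by positivity) (by linarith : (0:ℝ) ≤ w - x) :
        (0:ℝ) ≤ (d/2) * (w - x)), sub_nonneg.2 hwm]
    have h3 : f x ≤ f w * Real.exp (-d * (w - x)) := hwbd x hxw
    have hub : m - x ≤ ((2/d) + (m - w)) * Real.exp ((d/2) * (w - x)) := by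
      calc m - x = (w - x) + (m - w) := by ring
        _ ≤ (2/d) * Real.exp ((d/2)*(w-x)) + (m-w) * Real.exp ((d/2)*(w-x)) := add_le_add h1 h2
        _ = ((2/d) + (m - w)) * Real.exp ((d/2) * (w - x)) := by ring
    have h4 : (m - x) * f x ≤ ((2/d) + (m - w)) * Real.exp ((d/2) * (w - x)) *
        (f w * Real.exp (-d * (w - x))) :=
      mul_le_mul hub h3 hfx.le (le_trans (sub_nonneg.2 hxm) hub)
    have hEE : Real.exp ((d/2) * (w - x)) * Real.exp (-d * (w - x))
        = Real.exp (-(d/2) * (w - x)) := by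
      rw [← Real.exp_add]; ring_nf
    have h5 : ((2/d) + (m - w)) * Real.exp ((d/2) * (w - x)) * (f w * Real.exp (-d * (w - x)))
        = B * Real.exp (-(d/2) * (w - x)) := by
      rw [hB, ← hEE]; ring
    rw [abs_of_nonneg (mul_nonneg hB0 (Real.exp_pos _).le)]
    rw [h5] at h4
    calc -((x - m) * f x) = (m - x) * f x := by ring
      _ ≤ B * Real.exp (-(d/2) * (w - x)) := h4
  -- middle piece
  have hmid : IntegrableOn (fun x => (x - m) * f x) (Icc w v) volume :=
    ((continuous_id.sub continuous_const).mul hcont).integrableOn_Icc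
  have h12 : IntegrableOn (fun x => (x - m) * f x) (Ici w) volume := by
    have := hmid.union hright
    rwa [Icc_union_Ici_eq_Ici hwv] at this
  have := hleft.union h12
  rwa [Iic_union_Ici, integrableOn_univ] at this

lemma right_bound {f g : ℝ → ℝ} (hg : ConvexOn ℝ Set.univ g)
    (hfe : ∀ t, f t = Real.exp (-g t)) (hcont : Continuous f)
    (hpos : ∀ t, 0 < f t) (hint : Integrable f volume) (m : ℝ) :
    ∫ x in Ioi m, (x - m) * f x ≤ Gfun f m / (f m / Gfun f m) := by
  set p := Gfun f m with hp
  have hp0 : 0 < p := G_pos hpos hint m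
  set lam : ℝ := f m / p with hlam
  have hlam0 : 0 < lam := div_pos (hpos m) hp0
  have hGcont : Continuous (Gfun f) := by
    have h : Differentiable ℝ (Gfun f) := fun u => (G_deriv hcont hint u).differentiableAt
    exact h.continuous
  have hfi : IntegrableOn (fun x => (x - m) * f x) (Ioi m) volume :=
    (integrable_xf hg hfe hcont hpos hint m).integrableOn
  apply le_of_tendsto (intervalIntegral_tendsto_integral_Ioi m hfi Filter.tendsto_id)
  filter_upwards [Filter.eventually_ge_atTop m] with T hT
  -- integration by parts
  have hΦ : ∀ x : ℝ, HasDerivAt (fun x => -(x - m) * Gfun f x)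
      (-Gfun f x + (x - m) * f x) x := by
    intro x
    have h1 : HasDerivAt (fun x : ℝ => -(x - m)) (-1) x := by
      exact ((hasDerivAt_id x).sub_const m).neg
    have := h1.mul (G_deriv hcont hint x)
    convert this using 1
    iterate 3 rfl
    ring
  have hcont2 : Continuous fun x => -Gfun f x + (x - m) * f x :=
    hGcont.neg.add ((continuous_id.sub continuous_const).mul hcont)
  have hparts := intervalIntegral.integral_eq_sub_of_hasDerivAt
    (fun x _ => hΦ x) (hcont2.intervalIntegrable m T)
  -- split
  have hii1 : IntervalIntegrable (fun x => -Gfun f x) volume m T :=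
    (hGcont.neg).intervalIntegrable m T
  have hii2 : IntervalIntegrable (fun x => (x - m) * f x) volume m T :=
    ((continuous_id.sub continuous_const).mul hcont).intervalIntegrable m T
  have hsplit : (∫ x in m..T, (-Gfun f x + (x - m) * f x))
      = (∫ x in m..T, -Gfun f x) + ∫ x in m..T, (x - m) * f x :=
    intervalIntegral.integral_add hii1 hii2
  have hexp : ∀ x : ℝ, HasDerivAt (fun x => -(p / lam) * Real.exp (-lam * (x - m)))
      (p * Real.exp (-lam * (x - m))) x := by
    intro x
    have h0 : HasDerivAt (fun x : ℝ => -lam * (x - m)) (-lam) x := by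
      simpa using ((hasDerivAt_id x).sub_const m).const_mul (-lam)
    have := (h0.exp).const_mul (-(p / lam))
    refine this.congr_deriv ?_
    field_simp [hlam0.ne']
  have hexpint : (∫ x in m..T, p * Real.exp (-lam * (x - m)))
      = -(p / lam) * Real.exp (-lam * (T - m)) - (-(p / lam) * Real.exp (-lam * (m - m))) :=
    intervalIntegral.integral_eq_sub_of_hasDerivAt (fun x _ => hexp x)
      ((continuous_const.mul ((continuous_const.mul
        (continuous_id.sub continuous_const)).rexp)).intervalIntegrable m T)
  have hGb : (∫ x in m..T, Gfun f x) ≤ ∫ x in m..T, p * Real.exp (-lam * (x - m)) := by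
    apply intervalIntegral.integral_mono_on hT (hGcont.intervalIntegrable m T)
      ((continuous_const.mul ((continuous_const.mul
        (continuous_id.sub continuous_const)).rexp)).intervalIntegrable m T)
    intro x _
    have := tail_G hg hfe hcont hpos hint m x
    rw [← hp, ← hlam] at this
    exact this
  have hGT : 0 < Gfun f T := G_pos hpos hint T
  have hrw : (∫ x in m..T, (x - m) * f x)
      = (∫ x in m..T, Gfun f x) - (T - m) * Gfun f T := by
    have hneg : (∫ x in m..T, -Gfun f x) = -∫ x in m..T, Gfun f x :=
      intervalIntegral.integral_neg
    rw [hsplit, hneg] at hparts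
    have : -(T - m) * Gfun f T - -(m - m) * Gfun f m
        = -((T - m) * Gfun f T) := by ring
    rw [this] at hparts
    linarith
  simp only [id_eq]
  rw [hrw]
  have hE1 : (0:ℝ) < Real.exp (-lam * (T - m)) := Real.exp_pos _
  have hcalc : (∫ x in m..T, p * Real.exp (-lam * (x - m))) ≤ p / lam := by
    rw [hexpint]
    simp only [sub_self, mul_zero, neg_zero, Real.exp_zero]
    have hpl : 0 < p / lam := div_pos hp0 hlam0
    nlinarith
  nlinarith [mul_nonneg (sub_nonneg.2 hT) hGT.le]

lemma left_bound {f g : ℝ → ℝ} (hg : ConvexOn ℝ Set.univ g)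
    (hfe : ∀ t, f t = Real.exp (-g t)) (hcont : Continuous f)
    (hpos : ∀ t, 0 < f t) (hint : Integrable f volume) (htot : ∫ x, f x = 1) (m : ℝ) :
    (-Real.log (Gfun f m) + Gfun f m - 1) / (f m / Gfun f m)
      ≤ ∫ x in Iic m, (m - x) * f x := by
  set p := Gfun f m with hp
  have hp0 : 0 < p := G_pos hpos hint m
  set lam : ℝ := f m / p with hlam
  have hlam0 : 0 < lam := div_pos (hpos m) hp0
  have hq0 : 0 < Hfun f m := H_pos hpos hint m
  have hHG : ∀ t, Hfun f t = 1 - Gfun f t := by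
    intro t
    have := G_eq_sub hint t
    rw [htot] at this
    linarith
  have hp1 : p < 1 := by
    have := hHG m
    rw [← hp] at this
    linarith
  have hlogp : Real.log p < 0 := Real.log_neg hp0 hp1
  set t₀ : ℝ := m + Real.log p / lam with ht₀def
  have ht₀ : t₀ ≤ m := by
    rw [ht₀def]
    have : Real.log p / lam ≤ 0 := div_nonpos_iff.2 (Or.inr ⟨hlogp.le, hlam0.le⟩)
    linarith
  have hHcont : Continuous (Hfun f) := by
    have h : Differentiable ℝ (Hfun f) := fun u => (H_deriv hcont hint u).differentiableAt
    exact h.continuous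
  have hfi : IntegrableOn (fun x => (m - x) * f x) (Iic m) volume := by
    have h := (integrable_xf hg hfe hcont hpos hint m).neg
    have h2 : Integrable (fun x => (m - x) * f x) volume := by
      apply h.congr (Filter.Eventually.of_forall (fun x => by simp; ring))
    exact h2.integrableOn
  have htd := intervalIntegral_tendsto_integral_Iic m hfi Filter.tendsto_id
  set kap : ℝ := f m / Hfun f m with hkap
  have hkap0 : 0 < kap := div_pos (hpos m) hq0
  -- tail limit
  have htail : Filter.Tendsto (fun T => (m - T) * Hfun f T) Filter.atBot (nhds 0) := by
    have base : Filter.Tendsto (fun x : ℝ => x * Real.exp (-x)) Filter.atTop (nhds 0) := by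
      simpa using Real.tendsto_pow_mul_exp_neg_atTop_nhds_zero 1
    have hcm : Filter.Tendsto (fun u : ℝ => kap * u) Filter.atTop Filter.atTop :=
      Filter.Tendsto.const_mul_atTop hkap0 Filter.tendsto_id
    have inner : Filter.Tendsto (fun u : ℝ => u * Real.exp (-(kap * u)))
        Filter.atTop (nhds 0) := by
      have h1 := (base.comp hcm).const_mul (1 / kap)
      rw [mul_zero] at h1
      apply h1.congr
      intro u
      simp only [Function.comp]
      field_simp
    have hmt : Filter.Tendsto (fun T : ℝ => m - T) Filter.atBot Filter.atTop := by
      have h2 : Filter.Tendsto (fun T : ℝ => -T) Filter.atBot Filter.atTop :=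
        Filter.tendsto_neg_atBot_atTop
      have := Filter.tendsto_atTop_add_const_left Filter.atBot m h2
      apply this.congr
      intro T
      ring
    have hub : Filter.Tendsto (fun T : ℝ => Hfun f m * ((m - T) * Real.exp (-(kap * (m - T)))))
        Filter.atBot (nhds 0) := by
      have := (inner.comp hmt).const_mul (Hfun f m)
      rw [mul_zero] at this
      exact this
    apply tendsto_of_tendsto_of_tendsto_of_le_of_le' tendsto_const_nhds hub
    · filter_upwards [Filter.eventually_le_atBot m] with T hT
      exact mul_nonneg (by linarith) (H_pos hpos hint T).le
    · filter_upwards [Filter.eventually_le_atBot m] with T hT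
      have h3 := tail_H hg hfe hcont hpos hint m hT
      rw [← hkap] at h3
      have h4 : kap * (T - m) = -(kap * (m - T)) := by ring
      rw [h4] at h3
      calc (m - T) * Hfun f T ≤ (m - T) * (Hfun f m * Real.exp (-(kap * (m - T)))) :=
            mul_le_mul_of_nonneg_left h3 (by linarith)
        _ = Hfun f m * ((m - T) * Real.exp (-(kap * (m - T)))) := by ring
  -- main estimate
  have hsum := htd.add htail
  rw [add_zero] at hsum
  apply ge_of_tendsto hsum
  filter_upwards [Filter.eventually_le_atBot t₀] with T hT
  simp only [id_eq]
  have hTm : T ≤ m := le_trans hT ht₀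
  -- parts
  have hΦ : ∀ x : ℝ, HasDerivAt (fun x => (m - x) * Hfun f x)
      (-Hfun f x + (m - x) * f x) x := by
    intro x
    have h1 : HasDerivAt (fun x : ℝ => m - x) (-1) x := by
      exact (hasDerivAt_id x).const_sub m
    have := h1.mul (H_deriv hcont hint x)
    convert this using 1
    iterate 3 rfl
    ring
  have hcont2 : Continuous fun x => -Hfun f x + (m - x) * f x :=
    hHcont.neg.add ((continuous_const.sub continuous_id).mul hcont)
  have hparts := intervalIntegral.integral_eq_sub_of_hasDerivAt
    (f := fun x => (m - x) * Hfun f x) (a := T) (b := m)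
    (fun x _ => hΦ x) (hcont2.intervalIntegrable T m)
  have hii1 : IntervalIntegrable (fun x => -Hfun f x) volume T m :=
    (hHcont.neg).intervalIntegrable T m
  have hii2 : IntervalIntegrable (fun x => (m - x) * f x) volume T m :=
    ((continuous_const.sub continuous_id).mul hcont).intervalIntegrable T m
  have hsplit : (∫ x in T..m, (-Hfun f x + (m - x) * f x))
      = (∫ x in T..m, -Hfun f x) + ∫ x in T..m, (m - x) * f x :=
    intervalIntegral.integral_add hii1 hii2
  have hkey : (∫ x in T..m, (m - x) * f x) + (m - T) * Hfun f T = ∫ x in T..m, Hfun f x := by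
    have hneg : (∫ x in T..m, -Hfun f x) = -∫ x in T..m, Hfun f x :=
      intervalIntegral.integral_neg
    rw [hsplit, hneg] at hparts
    have h5 : (m - m) * Hfun f m - (m - T) * Hfun f T = -((m - T) * Hfun f T) := by ring
    rw [h5] at hparts
    linarith
  rw [hkey]
  -- lower bound the integral of H
  have hsplit2 : (∫ x in T..m, Hfun f x)
      = (∫ x in T..t₀, Hfun f x) + ∫ x in t₀..m, Hfun f x :=
    (intervalIntegral.integral_add_adjacent_intervals
      (hHcont.intervalIntegrable T t₀) (hHcont.intervalIntegrable t₀ m)).symm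
  have hnn : 0 ≤ ∫ x in T..t₀, Hfun f x :=
    intervalIntegral.integral_nonneg hT (fun x _ => (H_pos hpos hint x).le)
  have hcont3 : Continuous fun x : ℝ => 1 - p * Real.exp (-lam * (x - m)) :=
    continuous_const.sub (continuous_const.mul ((continuous_const.mul
      (continuous_id.sub continuous_const)).rexp))
  have hmono2 : (∫ x in t₀..m, (1 - p * Real.exp (-lam * (x - m))))
      ≤ ∫ x in t₀..m, Hfun f x := by
    apply intervalIntegral.integral_mono_on ht₀ (hcont3.intervalIntegrable t₀ m)
      (hHcont.intervalIntegrable t₀ m)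
    intro x _
    have h6 := tail_G hg hfe hcont hpos hint m x
    rw [← hp, ← hlam] at h6
    rw [hHG x]
    linarith
  -- compute the explicit integral
  have hexp : ∀ x : ℝ, HasDerivAt (fun x => x + (p / lam) * Real.exp (-lam * (x - m)))
      (1 - p * Real.exp (-lam * (x - m))) x := by
    intro x
    have h0 : HasDerivAt (fun x : ℝ => -lam * (x - m)) (-lam) x := by
      simpa using ((hasDerivAt_id x).sub_const m).const_mul (-lam)
    have := (hasDerivAt_id x).add ((h0.exp).const_mul (p / lam))
    refine this.congr_deriv ?_
    field_simp [hlam0.ne']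
    ring
  have hcomp : (∫ x in t₀..m, (1 - p * Real.exp (-lam * (x - m))))
      = (m + (p / lam) * Real.exp (-lam * (m - m)))
        - (t₀ + (p / lam) * Real.exp (-lam * (t₀ - m))) :=
    intervalIntegral.integral_eq_sub_of_hasDerivAt (fun x _ => hexp x)
      (hcont3.intervalIntegrable t₀ m)
  have hval : Real.exp (-lam * (t₀ - m)) = p⁻¹ := by
    rw [ht₀def]
    have h7 : -lam * (m + Real.log p / lam - m) = -Real.log p := by
      field_simp
      ring
    rw [h7, Real.exp_neg, Real.exp_log hp0]
  have hC : (∫ x in t₀..m, (1 - p * Real.exp (-lam * (x - m))))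
      = (-Real.log p + p - 1) / lam := by
    rw [hcomp, hval, ht₀def]
    simp only [sub_self, mul_zero, neg_zero, Real.exp_zero]
    field_simp
    ring
  rw [hsplit2]
  rw [hC] at hmono2
  linarith

theorem stmt3 (f g : ℝ → ℝ) (hg : ConvexOn ℝ Set.univ g)
    (hf : ∀ t, f t = Real.exp (-g t))
    (μ : Measure ℝ)
    (hμ : μ = MeasureTheory.volume.withDensity (fun x => ENNReal.ofReal (f x)))
    (hprob : IsProbabilityMeasure μ)
    (m : ℝ) (hm : m = ∫ x, x ∂μ) :
    ENNReal.ofReal (Real.exp (-1)) ≤ μ (Set.Ici m) := by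
  have hcont : Continuous f := f_cont hg hf
  have hpos : ∀ t, 0 < f t := f_pos hf
  have hmeas : Measurable f := hcont.measurable
  have huniv : μ univ = 1 := hprob.measure_univ
  have hlint : ∫⁻ x, ENNReal.ofReal (f x) = 1 := by
    rw [hμ, withDensity_apply _ MeasurableSet.univ, Measure.restrict_univ] at huniv
    exact huniv
  have hint : Integrable f volume := by
    refine ⟨hcont.aestronglyMeasurable, ?_⟩
    rw [hasFiniteIntegral_def]
    have : ∫⁻ a, ‖f a‖ₑ ∂volume = 1 := by
      rw [← hlint]
      apply lintegral_congr
      intro a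
      exact Real.enorm_eq_ofReal (hpos a).le
    rw [this]
    exact ENNReal.one_lt_top
  have htot : ∫ x, f x = 1 := by
    rw [integral_eq_lintegral_of_nonneg_ae (Filter.Eventually.of_forall (fun x => (hpos x).le))
      hcont.aestronglyMeasurable, hlint]
    rfl
  -- mean identity
  have hmean : ∫ x, x ∂μ = ∫ x, x * f x := by
    rw [hμ]
    have hd : (fun x => ENNReal.ofReal (f x)) = fun x => ((f x).toNNReal : ENNReal) := rfl
    rw [hd, integral_withDensity_eq_integral_smul hmeas.real_toNNReal (fun x => x)]
    apply integral_congr_ae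
    apply Filter.Eventually.of_forall
    intro x
    simp [NNReal.smul_def, Real.coe_toNNReal _ (hpos x).le]
    ring
  have hIxf : Integrable (fun x => (x - m) * f x) volume := integrable_xf hg hf hcont hpos hint m
  have hxf : Integrable (fun x => x * f x) volume := by
    have h := hIxf.add (hint.const_mul m)
    apply h.congr (Filter.Eventually.of_forall (fun x => by simp; ring))
  have hzero : ∫ x, (x - m) * f x = 0 := by
    have hr : (fun x => (x - m) * f x) = fun x => x * f x - m * f x := funext fun x => by ring
    rw [hr, integral_sub hxf (hint.const_mul m), integral_const_mul, htot, ← hmean, ← hm]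
    ring
  -- split
  have hL : ∫ x in Iio m, (x - m) * f x = -∫ x in Iic m, (m - x) * f x := by
    rw [integral_Iic_eq_integral_Iio]
    rw [← integral_neg]
    apply integral_congr_ae
    apply Filter.Eventually.of_forall
    intro x
    simp
    ring
  have hR : ∫ x in Ici m, (x - m) * f x = ∫ x in Ioi m, (x - m) * f x :=
    integral_Ici_eq_integral_Ioi
  have hsplit : (∫ x in Iio m, (x - m) * f x) + ∫ x in Ici m, (x - m) * f x
      = ∫ x, (x - m) * f x :=
    intervalIntegral.integral_Iio_add_Ici hIxf.integrableOn hIxf.integrableOn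
  have hLR : ∫ x in Iic m, (m - x) * f x = ∫ x in Ioi m, (x - m) * f x := by
    rw [hzero] at hsplit
    rw [hL, hR] at hsplit
    linarith
  -- combine bounds
  set p := Gfun f m with hp
  have hp0 : 0 < p := G_pos hpos hint m
  set lam : ℝ := f m / p with hlam
  have hlam0 : 0 < lam := div_pos (hpos m) hp0
  have hchain : (-Real.log p + p - 1) / lam ≤ p / lam := by
    calc (-Real.log p + p - 1) / lam ≤ ∫ x in Iic m, (m - x) * f x :=
          left_bound hg hf hcont hpos hint htot m
      _ = ∫ x in Ioi m, (x - m) * f x := hLR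
      _ ≤ p / lam := right_bound hg hf hcont hpos hint m
  have hlog : -Real.log p ≤ 1 := by
    have h1 := mul_le_mul_of_nonneg_right hchain hlam0.le
    rw [div_mul_cancel₀ _ hlam0.ne', div_mul_cancel₀ _ hlam0.ne'] at h1
    linarith
  have hfinal : Real.exp (-1) ≤ p := by
    calc Real.exp (-1) ≤ Real.exp (Real.log p) := Real.exp_le_exp.2 (by linarith)
      _ = p := Real.exp_log hp0
  -- conclude
  rw [hμ, withDensity_apply _ measurableSet_Ici]
  have hofReal : ∫⁻ x in Ici m, ENNReal.ofReal (f x) = ENNReal.ofReal (Gfun f m) := by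
    rw [← ofReal_integral_eq_lintegral_ofReal hint.integrableOn
      (Filter.Eventually.of_forall (fun x => (hpos x).le))]
    rfl
  rw [hofReal]
  exact ENNReal.ofReal_le_ofReal hfinal
end

section
/- Let K, L be convex bodies in ℝ^d with r B₂^d ⊆ K ⊆ R B₂^d, let 0 < ρ < 1/2, 0 < ε < r/(16R), and let N be an ε-net in S^{d-1}. If (1-ρ)‖ω‖_L ≤ ‖ω‖_K ≤ (1+ρ)‖ω‖_L for every ω ∈ N, then for all x ∈ ℝ^d, (1 + 2ρ + 28Rε/r)^{-1}‖x‖_L ≤ ‖x‖_K ≤ (1 + 2ρ + 28Rε/r)‖x‖_L. -/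
set_option maxHeartbeats 800000 in
lemma stmt8_arith (r R ρ ε M a b a' b' : ℝ)
    (hr : 0 < r) (hrR : r ≤ R)
    (hρ₀ : 0 < ρ) (hρ₁ : ρ < 1/2)
    (hε₀ : 0 < ε) (hεc : ε * (16*R) ≤ r)
    (hMc : M * (15*r) ≤ 32) (hM0 : 0 ≤ M)
    (h1 : (1-ρ)*b' ≤ a') (h2 : a' ≤ (1+ρ)*b')
    (h3 : a*r ≤ a'*r + ε) (h4 : a'*r ≤ a*r + ε)
    (h5 : b ≤ b' + M*ε) (h6 : b' ≤ b + M*ε)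
    (h7 : 1 ≤ a*R) (h7' : 1 ≤ a'*R)
    (hb0 : 0 ≤ b) (hb'0 : 0 ≤ b') (ha0 : 0 ≤ a) :
    (1+2*ρ+28*R*ε/r)⁻¹ * b ≤ a ∧ a ≤ (1+2*ρ+28*R*ε/r) * b := by
  have hR : 0 < R := lt_of_lt_of_le hr hrR
  have hC : 0 < 1+2*ρ+28*R*ε/r := by positivity
  -- M*ε*R ≤ 2/15
  have t1 : M*(ε*(16*R)) ≤ M*r := mul_le_mul_of_nonneg_left hεc hM0
  have hMεR : M*ε*R ≤ 2/15 := by nlinarith [t1, hMc]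
  have hMεr : M*ε*r*15 ≤ 32*ε := by nlinarith [mul_le_mul_of_nonneg_right hMc hε₀.le]
  -- lower bound on b: 8 ≤ b*(15*R)
  have e1 : 1 ≤ ((1+ρ)*b')*R := le_trans h7' (mul_le_mul_of_nonneg_right h2 hR.le)
  have e2 : 2 ≤ 3*(b'*R) := by
    nlinarith [mul_nonneg (by linarith : (0:ℝ) ≤ 1/2 - ρ) (mul_nonneg hb'0 hR.le)]
  have hb_low : 8 ≤ b*(15*R) := by
    nlinarith [mul_le_mul_of_nonneg_right h6 hR.le, hMεR, e2]
  constructor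
  · rw [inv_mul_le_iff₀ hC]
    have h1ρ : (0:ℝ) < 1 - ρ := by linarith
    have d1 : (1-ρ)*(b*r) ≤ (1-ρ)*(b'*r) + M*ε*r := by
      nlinarith [mul_le_mul_of_nonneg_left (mul_le_mul_of_nonneg_right h5 hr.le) h1ρ.le,
        mul_nonneg (mul_nonneg hρ₀.le hM0) (mul_nonneg hε₀.le hr.le)]
    have d2 : (1-ρ)*(b'*r) ≤ a*r + ε := by
      nlinarith [mul_le_mul_of_nonneg_right h1 hr.le]
    have d4 : a*r + (47/15)*ε ≤ (1-ρ)*((1+2*ρ)*(a*r)+28*R*ε*a) := by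
      nlinarith [mul_le_mul_of_nonneg_left h7 hε₀.le,
        mul_nonneg (mul_nonneg hρ₀.le (by linarith : (0:ℝ) ≤ 1 - 2*ρ)) (mul_nonneg ha0 hr.le),
        mul_nonneg (by linarith : (0:ℝ) ≤ 1/2 - ρ)
          (mul_nonneg (mul_nonneg hR.le hε₀.le) ha0)]
    have step2 : (1-ρ)*(b*r) ≤ (1-ρ)*((1+2*ρ)*(a*r)+28*R*ε*a) := by linarith
    have key2 : b*r ≤ (1+2*ρ)*(a*r)+28*R*ε*a := le_of_mul_le_mul_left step2 h1ρ
    have eq2 : (1+2*ρ+28*R*ε/r)*a*r = (1+2*ρ)*(a*r)+28*R*ε*a := by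
      field_simp
    rw [← mul_le_mul_iff_of_pos_right hr, eq2]
    exact key2
  · have c1 : a*r ≤ ((1+ρ)*b')*r + ε := le_trans h3 (by linarith [mul_le_mul_of_nonneg_right h2 hr.le])
    have c2 : (1+ρ)*(b'*r) ≤ (1+ρ)*((b + M*ε)*r) :=
      mul_le_mul_of_nonneg_left (mul_le_mul_of_nonneg_right h6 hr.le) (by linarith)
    have u1 : a*r ≤ (1+ρ)*(b*r) + (1+ρ)*(M*ε*r) + ε := by nlinarith [c1, c2]
    have u2 : (1+ρ)*(M*ε*r) ≤ (16/5)*ε := by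
      nlinarith [hMεr, mul_nonneg (by linarith : (0:ℝ) ≤ 1/2 - ρ)
        (mul_nonneg (mul_nonneg hM0 hε₀.le) hr.le)]
    have u3 : (21/5)*ε ≤ ρ*(b*r) + 28*R*ε*b := by
      nlinarith [mul_le_mul_of_nonneg_left hb_low hε₀.le,
        mul_nonneg hρ₀.le (mul_nonneg hb0 hr.le)]
    have key : a*r ≤ (1+2*ρ)*(b*r) + 28*R*ε*b := by nlinarith [u1, u2, u3]
    have eq1 : (1+2*ρ+28*R*ε/r)*b*r = (1+2*ρ)*(b*r)+28*R*ε*b := by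
      field_simp
    rw [← mul_le_mul_iff_of_pos_right hr, eq1]
    exact key

open Metric Set Filter Topology

set_option maxHeartbeats 1000000 in
theorem stmt8 (d : ℕ) (K L : Set (EuclideanSpace ℝ (Fin d)))
    (hKconv : Convex ℝ K) (hKcomp : IsCompact K)
    (hLconv : Convex ℝ L) (hLcomp : IsCompact L)
    (hL0 : (0 : EuclideanSpace ℝ (Fin d)) ∈ interior L)
    (r R : ℝ) (hr : 0 < r) (hR : 0 < R)
    (hKr : Metric.closedBall 0 r ⊆ K) (hKR : K ⊆ Metric.closedBall 0 R)
    (ρ ε : ℝ) (hρ₀ : 0 < ρ) (hρ₁ : ρ < 1/2) (hε₀ : 0 < ε) (hε₁ : ε < r / (16 * R))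
    (N : Set (EuclideanSpace ℝ (Fin d)))
    (hsub : N ⊆ Metric.sphere 0 1)
    (hcov : ∀ θ ∈ Metric.sphere (0 : EuclideanSpace ℝ (Fin d)) 1,
      ∃ ω ∈ N, dist θ ω ≤ ε)
    (hnet : ∀ ω ∈ N, (1 - ρ) * gauge L ω ≤ gauge K ω ∧ gauge K ω ≤ (1 + ρ) * gauge L ω) :
    ∀ x : EuclideanSpace ℝ (Fin d),
      (1 + 2 * ρ + 28 * R * ε / r)⁻¹ * gauge L x ≤ gauge K x ∧
      gauge K x ≤ (1 + 2 * ρ + 28 * R * ε / r) * gauge L x := by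
  intro x
  by_cases hx : x = 0
  · simp [hx, gauge_zero]
  -- basic absorbency facts
  have hK0 : (0 : EuclideanSpace ℝ (Fin d)) ∈ interior K :=
    interior_mono hKr (by rw [interior_closedBall _ hr.ne']; exact mem_ball_self hr)
  have haK : Absorbent ℝ K := absorbent_nhds_zero (mem_interior_iff_mem_nhds.1 hK0)
  have haL : Absorbent ℝ L := absorbent_nhds_zero (mem_interior_iff_mem_nhds.1 hL0)
  have hKup : ∀ y : EuclideanSpace ℝ (Fin d), gauge K y ≤ ‖y‖ / r := by
    intro y
    have h := gauge_mono (absorbent_nhds_zero (Metric.closedBall_mem_nhds 0 hr)) hKr y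
    rwa [gauge_closedBall hr.le] at h
  have hKlow : ∀ y : EuclideanSpace ℝ (Fin d), ‖y‖ / R ≤ gauge K y := by
    intro y
    have h := gauge_mono haK hKR y
    rwa [gauge_closedBall hR.le] at h
  -- r ≤ R
  have hxn : (0:ℝ) < ‖x‖ := norm_pos_iff.2 hx
  have hrR : r ≤ R := by
    have h := (hKlow x).trans (hKup x)
    rw [div_le_div_iff₀ hR hr] at h
    exact le_of_mul_le_mul_left (by linarith) hxn
  have hεc : ε * (16*R) ≤ r := ((lt_div_iff₀ (by positivity)).1 hε₁).le
  have hε16 : ε < 1/16 := by nlinarith [(lt_div_iff₀ (by positivity : (0:ℝ) < 16*R)).1 hε₁]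
  have h1ρ : (0:ℝ) < 1 - ρ := by linarith
  have h1ε : (0:ℝ) < 1 - ε := by linarith
  -- initial Lipschitz bound for gauge L
  obtain ⟨δ, hδ0, hδL⟩ : ∃ δ > 0, Metric.ball (0 : EuclideanSpace ℝ (Fin d)) δ ⊆ L :=
    Metric.mem_nhds_iff.1 (mem_interior_iff_mem_nhds.1 hL0)
  set c₀ : ℝ := 1/δ with hc₀def
  have hc₀0 : 0 ≤ c₀ := by positivity
  have hc0 : ∀ y : EuclideanSpace ℝ (Fin d), gauge L y ≤ c₀ * ‖y‖ := by
    intro y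
    have h := gauge_mono (absorbent_ball_zero hδ0) hδL y
    rw [gauge_ball hδ0.le] at h
    exact le_of_le_of_eq h (by rw [hc₀def]; ring)
  set A : ℝ := 1/((1-ρ)*r) with hAdef
  set M : ℝ := A/(1-ε) with hMdef
  have hA0 : 0 < A := by rw [hAdef]; positivity
  have hMpos : 0 < M := by rw [hMdef]; positivity
  -- bound of gauge L on the net
  have hLnetbd : ∀ ω ∈ N, gauge L ω ≤ A := by
    intro ω hω
    have hω1 : ‖ω‖ = 1 := mem_sphere_zero_iff_norm.1 (hsub hω)
    have hKω : gauge K ω * r ≤ 1 := by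
      have := hKup ω; rw [hω1] at this; exact (le_div_iff₀ hr).1 this
    have hnet1 := (hnet ω hω).1
    rw [hAdef, le_div_iff₀ (by positivity)]
    nlinarith [mul_le_mul_of_nonneg_right hnet1 hr.le, gauge_nonneg (s := L) ω]
  -- bootstrapping step
  have step : ∀ c : ℝ, 0 ≤ c → (∀ y, gauge L y ≤ c * ‖y‖) →
      ∀ y : EuclideanSpace ℝ (Fin d), gauge L y ≤ (A + c*ε) * ‖y‖ := by
    intro c hc hcb y
    by_cases hy : y = 0
    · simp [hy, gauge_zero]
    have hyn : (0:ℝ) < ‖y‖ := norm_pos_iff.2 hy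
    set θ : EuclideanSpace ℝ (Fin d) := ‖y‖⁻¹ • y with hθdef
    have hθ1 : ‖θ‖ = 1 := norm_smul_inv_norm (𝕜 := ℝ) hy
    obtain ⟨ω, hωN, hdist⟩ := hcov θ (mem_sphere_zero_iff_norm.2 hθ1)
    have hθω : ‖θ - ω‖ ≤ ε := by rwa [← dist_eq_norm]
    have hsubadd : gauge L θ ≤ gauge L ω + gauge L (θ - ω) := by
      have h := gauge_add_le hLconv haL ω (θ - ω)
      rwa [show ω + (θ - ω) = θ by abel] at h
    have h3 : gauge L (θ - ω) ≤ c * ε :=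
      (hcb _).trans (mul_le_mul_of_nonneg_left hθω hc)
    have hθbd : gauge L θ ≤ A + c*ε := by
      have := hLnetbd ω hωN; linarith
    have hyθ : y = ‖y‖ • θ := by
      rw [hθdef, smul_smul, mul_inv_cancel₀ hyn.ne', one_smul]
    calc gauge L y = ‖y‖ * gauge L θ := by
          conv_lhs => rw [hyθ]
          rw [gauge_smul_of_nonneg (norm_nonneg y), smul_eq_mul]
      _ ≤ ‖y‖ * (A + c*ε) := mul_le_mul_of_nonneg_left hθbd (norm_nonneg y)
      _ = (A + c*ε) * ‖y‖ := by ring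
  have hMfix : A + M*ε = M := by
    rw [hMdef]; field_simp; ring
  have bound : ∀ n : ℕ, ∀ y : EuclideanSpace ℝ (Fin d),
      gauge L y ≤ (M + ε^n * c₀) * ‖y‖ := by
    intro n
    induction n with
    | zero =>
      intro y
      have h := hc0 y
      have : c₀ * ‖y‖ ≤ (M + ε^0 * c₀) * ‖y‖ := by
        apply mul_le_mul_of_nonneg_right _ (norm_nonneg y)
        simp; linarith
      linarith
    | succ n ih =>
      intro y
      have hcn : 0 ≤ M + ε^n*c₀ := by positivity
      have h := step (M + ε^n*c₀) hcn ih y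
      calc gauge L y ≤ (A + (M + ε^n*c₀)*ε) * ‖y‖ := h
        _ = (M + ε^(n+1) * c₀) * ‖y‖ := by ring_nf; linear_combination ‖y‖ * hMfix
  have hM : ∀ y : EuclideanSpace ℝ (Fin d), gauge L y ≤ M * ‖y‖ := by
    intro y
    have ht : Tendsto (fun n : ℕ => (M + ε^n*c₀)*‖y‖) atTop (𝓝 ((M + 0*c₀)*‖y‖)) :=
      ((tendsto_const_nhds.add
        ((tendsto_pow_atTop_nhds_zero_of_lt_one hε₀.le (by linarith)).mul_const c₀)).mul_const ‖y‖)
    rw [zero_mul, add_zero] at ht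
    exact ge_of_tendsto' ht (fun n => bound n y)
  have hMc : M * (15*r) ≤ 32 := by
    have hident : M * ((1-ρ)*(1-ε)*r) = 1 := by
      rw [hMdef, hAdef]; field_simp
    nlinarith [mul_pos hMpos hr,
      mul_nonneg (by linarith : (0:ℝ) ≤ 1/2 - ρ) (by linarith : (0:ℝ) ≤ 1/16 - ε),
      mul_nonneg (mul_nonneg (by linarith : (0:ℝ) ≤ 1/2 - ρ) (by linarith : (0:ℝ) ≤ 1/16 - ε))
        (mul_pos hMpos hr).le]
  -- main argument on the sphere
  set θ : EuclideanSpace ℝ (Fin d) := ‖x‖⁻¹ • x with hθdef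
  have hθ1 : ‖θ‖ = 1 := norm_smul_inv_norm (𝕜 := ℝ) hx
  obtain ⟨ω, hωN, hdist⟩ := hcov θ (mem_sphere_zero_iff_norm.2 hθ1)
  have hω1 : ‖ω‖ = 1 := mem_sphere_zero_iff_norm.1 (hsub hωN)
  have hθω : ‖θ - ω‖ ≤ ε := by rwa [← dist_eq_norm]
  have hωθ : ‖ω - θ‖ ≤ ε := by rwa [norm_sub_rev]
  have hKθω : gauge K (θ - ω) * r ≤ ε := by
    have h := hKup (θ - ω)
    have := (le_div_iff₀ hr).1 h
    linarith
  have hKωθ : gauge K (ω - θ) * r ≤ ε := by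
    have h := hKup (ω - θ)
    have := (le_div_iff₀ hr).1 h
    linarith
  have h3 : gauge K θ * r ≤ gauge K ω * r + ε := by
    have h := gauge_add_le hKconv haK ω (θ - ω)
    rw [show ω + (θ - ω) = θ by abel] at h
    nlinarith [mul_le_mul_of_nonneg_right h hr.le]
  have h4 : gauge K ω * r ≤ gauge K θ * r + ε := by
    have h := gauge_add_le hKconv haK θ (ω - θ)
    rw [show θ + (ω - θ) = ω by abel] at h
    nlinarith [mul_le_mul_of_nonneg_right h hr.le]
  have h5 : gauge L θ ≤ gauge L ω + M * ε := by
    have h := gauge_add_le hLconv haL ω (θ - ω)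
    rw [show ω + (θ - ω) = θ by abel] at h
    have := (hM (θ - ω)).trans (mul_le_mul_of_nonneg_left hθω hMpos.le)
    linarith
  have h6 : gauge L ω ≤ gauge L θ + M * ε := by
    have h := gauge_add_le hLconv haL θ (ω - θ)
    rw [show θ + (ω - θ) = ω by abel] at h
    have := (hM (ω - θ)).trans (mul_le_mul_of_nonneg_left hωθ hMpos.le)
    linarith
  have h7 : 1 ≤ gauge K θ * R := by
    have h := hKlow θ; rw [hθ1] at h; exact (div_le_iff₀ hR).1 h
  have h7' : 1 ≤ gauge K ω * R := by
    have h := hKlow ω; rw [hω1] at h; exact (div_le_iff₀ hR).1 h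
  have main := stmt8_arith r R ρ ε M (gauge K θ) (gauge L θ) (gauge K ω) (gauge L ω)
    hr hrR hρ₀ hρ₁ hε₀ hεc hMc hMpos.le
    (hnet ω hωN).1 (hnet ω hωN).2 h3 h4 h5 h6 h7 h7'
    (gauge_nonneg _) (gauge_nonneg _) (gauge_nonneg _)
  -- scale back from the sphere to x
  have hxθ : x = ‖x‖ • θ := by
    rw [hθdef, smul_smul, mul_inv_cancel₀ hxn.ne', one_smul]
  have hgK : gauge K x = ‖x‖ * gauge K θ := by
    conv_lhs => rw [hxθ]
    rw [gauge_smul_of_nonneg (norm_nonneg x)]; simp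
  have hgL : gauge L x = ‖x‖ * gauge L θ := by
    conv_lhs => rw [hxθ]
    rw [gauge_smul_of_nonneg (norm_nonneg x)]; simp
  rw [hgK, hgL]
  constructor
  · calc (1+2*ρ+28*R*ε/r)⁻¹ * (‖x‖ * gauge L θ)
        = ‖x‖ * ((1+2*ρ+28*R*ε/r)⁻¹ * gauge L θ) := by ring
      _ ≤ ‖x‖ * gauge K θ := mul_le_mul_of_nonneg_left main.1 (norm_nonneg x)
  · calc ‖x‖ * gauge K θ ≤ ‖x‖ * ((1+2*ρ+28*R*ε/r) * gauge L θ) :=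
        mul_le_mul_of_nonneg_left main.2 (norm_nonneg x)
      _ = (1+2*ρ+28*R*ε/r) * (‖x‖ * gauge L θ) := by ring
end

section
/- Let p > 1 and let μ be a p-log-concave probability measure on ℝ^d, i.e., with density f(x) = c·exp(-g(x)^p) where g ≥ 0 is convex and tends to ∞ at infinity. Then there exist c₁, c₂, t₀ > 0 such that for all unit vectors θ and all t ≥ t₀, μ({x : ⟨x,θ⟩ ≥ t}) ≤ c₁ t^{1-p} e^{-c₂ t^p}. -/
open MeasureTheory Set Filter
open scoped RealInnerProductSpace ENNReal

lemma aux_pow_le_exp (n : ℕ) {u : ℝ} (hu : 0 ≤ u) : u ^ n / n.factorial ≤ Real.exp u := by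
  refine le_trans ?_ (Real.sum_le_exp_of_nonneg hu (n + 1))
  exact Finset.single_le_sum (f := fun i => u ^ i / i.factorial)
    (fun i _ => by positivity) (Finset.self_mem_range_succ n)

lemma aux_integrable_exp_neg_mul_norm (d : ℕ) {ε : ℝ} (hε : 0 < ε) :
    Integrable (fun x : EuclideanSpace ℝ (Fin d) => Real.exp (-(ε * ‖x‖))) := by
  set n := d + 1 with hn
  have hfr : (Module.finrank ℝ (EuclideanSpace ℝ (Fin d)) : ℝ) < (n : ℝ) := by
    simp [hn, finrank_euclideanSpace]
  have hint := integrable_one_add_norm (E := EuclideanSpace ℝ (Fin d))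
    (μ := (volume : Measure (EuclideanSpace ℝ (Fin d)))) (r := (n : ℝ)) hfr
  refine ((hint.const_mul (Real.exp ε * n.factorial * ε⁻¹ ^ n)).mono'
    ((Real.continuous_exp.comp (continuous_const.mul continuous_norm).neg).aestronglyMeasurable)
    (Filter.Eventually.of_forall fun x => ?_))
  have hs : (0:ℝ) ≤ ‖x‖ := norm_nonneg x
  set s := ‖x‖ with hsdef
  have h1s : (0:ℝ) < 1 + s := by linarith
  have hu : (0:ℝ) < ε * (1 + s) := by positivity
  have h1 : (ε * (1 + s)) ^ n / n.factorial ≤ Real.exp (ε * (1 + s)) := aux_pow_le_exp n hu.le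
  have h2 : Real.exp (-(ε * (1 + s))) ≤ n.factorial / (ε * (1 + s)) ^ n := by
    rw [Real.exp_neg, inv_le_comm₀ (Real.exp_pos _) (by positivity), inv_div]
    exact h1
  have h3 : Real.exp (-(ε * s)) = Real.exp ε * Real.exp (-(ε * (1 + s))) := by
    rw [← Real.exp_add]; ring_nf
  have h4 : Real.exp ε * (n.factorial / (ε * (1 + s)) ^ n)
      = Real.exp ε * n.factorial * ε⁻¹ ^ n * (1 + s) ^ (-(n:ℝ)) := by
    rw [Real.rpow_neg h1s.le, Real.rpow_natCast, mul_pow]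
    field_simp
    rw [← mul_pow, mul_one_div_cancel hε.ne', one_pow]
  calc ‖Real.exp (-(ε * s))‖ = Real.exp (-(ε * s)) := by
        exact Real.norm_of_nonneg (Real.exp_pos _).le
    _ ≤ Real.exp ε * (n.factorial / (ε * (1 + s)) ^ n) := by
        rw [h3]; exact mul_le_mul_of_nonneg_left h2 (Real.exp_pos _).le
    _ = Real.exp ε * n.factorial * ε⁻¹ ^ n * (1 + s) ^ (-(n:ℝ)) := h4

theorem stmt11 (d : ℕ) (p : ℝ) (hp : 1 < p)
    (g : EuclideanSpace ℝ (Fin d) → ℝ) (c : ℝ) (hc : 0 < c)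
    (hg0 : ∀ x, 0 ≤ g x)
    (hgconv : ConvexOn ℝ Set.univ g)
    (hgtend : Filter.Tendsto g (Filter.comap (fun x => ‖x‖) Filter.atTop) Filter.atTop)
    (f : EuclideanSpace ℝ (Fin d) → ℝ)
    (hf : ∀ x, f x = c * Real.exp (-(g x ^ p)))
    (μ : Measure (EuclideanSpace ℝ (Fin d)))
    (hμ : μ = MeasureTheory.volume.withDensity (fun x => ENNReal.ofReal (f x)))
    (hprob : IsProbabilityMeasure μ) :
    ∃ c₁ c₂ t₀ : ℝ, 0 < c₁ ∧ 0 < c₂ ∧ 0 < t₀ ∧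
      ∀ θ : EuclideanSpace ℝ (Fin d), ‖θ‖ = 1 → ∀ t : ℝ, t₀ ≤ t →
        (μ {x | t ≤ ⟪x, θ⟫}).toReal ≤ c₁ * t ^ (1 - p) * Real.exp (-(c₂ * t ^ p)) := by
  have hp0 : (0:ℝ) < p := lt_trans one_pos hp
  -- Step 1: radius R beyond which g ≥ g 0 + 1
  obtain ⟨R₀, hR₀⟩ : ∃ R₀ : ℝ, ∀ x : EuclideanSpace ℝ (Fin d), R₀ ≤ ‖x‖ → g 0 + 1 ≤ g x := by
    have h := hgtend.eventually (eventually_ge_atTop (g 0 + 1))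
    rw [eventually_comap] at h
    rw [eventually_atTop] at h
    obtain ⟨R₀, hR₀⟩ := h
    exact ⟨R₀, fun x hx => hR₀ ‖x‖ hx x rfl⟩
  set R := max R₀ 1 with hRdef
  have hR1 : (1:ℝ) ≤ R := le_max_right _ _
  have hRpos : (0:ℝ) < R := lt_of_lt_of_le one_pos hR1
  have hRg : ∀ x, R ≤ ‖x‖ → g 0 + 1 ≤ g x := fun x hx =>
    hR₀ x (le_trans (le_max_left _ _) hx)
  -- Step 2: linear growth
  have hgrow : ∀ x : EuclideanSpace ℝ (Fin d), R ≤ ‖x‖ → ‖x‖ / R ≤ g x := by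
    intro x hx
    have hxn : 0 < ‖x‖ := lt_of_lt_of_le hRpos hx
    set l := R / ‖x‖ with hl
    have hl0 : 0 < l := div_pos hRpos hxn
    have hl1 : l ≤ 1 := (div_le_one hxn).2 hx
    have hny : ‖l • x‖ = R := by
      rw [norm_smul, Real.norm_eq_abs, abs_of_pos hl0, hl, div_mul_cancel₀ _ hxn.ne']
    have hcv := hgconv.2 (Set.mem_univ x) (Set.mem_univ (0 : EuclideanSpace ℝ (Fin d)))
      hl0.le (sub_nonneg.2 hl1) (by ring)
    rw [smul_zero, add_zero] at hcv
    have h1 : g 0 + 1 ≤ g (l • x) := hRg _ (by rw [hny])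
    simp only [smul_eq_mul] at hcv
    have h2 : 1 ≤ (g x - g 0) * l := by nlinarith [hg0 0]
    have h3 : 1 / l ≤ g x - g 0 := (div_le_iff₀ hl0).2 h2
    rw [hl, one_div_div] at h3
    linarith [hg0 0]
  -- Step 3: the comparison integral
  set P : ℝ := R ^ p with hPdef
  have hPpos : (0:ℝ) < P := Real.rpow_pos_of_pos hRpos p
  set h : EuclideanSpace ℝ (Fin d) → ℝ :=
    fun x => c * Real.exp (-((‖x‖ / R) ^ p / 2)) with hhdef
  have hhcont : Continuous h := by
    refine continuous_const.mul (Real.continuous_exp.comp ?_)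
    exact (((continuous_norm.div_const R).rpow_const
      (fun x => Or.inr hp0.le)).div_const 2).neg
  have hhpos : ∀ x, 0 < h x := fun x => by positivity
  have hInth : Integrable h := by
    have hε : (0:ℝ) < (2 * R)⁻¹ := by positivity
    refine ((aux_integrable_exp_neg_mul_norm d hε).const_mul
      (c * Real.exp (2⁻¹ : ℝ))).mono' (hhcont.aestronglyMeasurable)
      (Filter.Eventually.of_forall fun x => ?_)
    rw [Real.norm_of_nonneg (hhpos x).le, hhdef]
    have hs : (0:ℝ) ≤ ‖x‖ := norm_nonneg x
    have key : (2 * R)⁻¹ * ‖x‖ - 2⁻¹ ≤ (‖x‖ / R) ^ p / 2 := by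
      rcases le_or_gt R ‖x‖ with hcase | hcase
      · have h1 : (1:ℝ) ≤ ‖x‖ / R := (one_le_div hRpos).2 hcase
        have h2 : ‖x‖ / R ≤ (‖x‖ / R) ^ p := by
          calc ‖x‖ / R = (‖x‖ / R) ^ (1:ℝ) := (Real.rpow_one _).symm
            _ ≤ (‖x‖ / R) ^ p := Real.rpow_le_rpow_of_exponent_le h1 hp.le
        have h3 : (2 * R)⁻¹ * ‖x‖ = (‖x‖ / R) / 2 := by rw [mul_inv]; ring
        rw [h3]
        linarith
      · have h1 : (0:ℝ) ≤ (‖x‖ / R) ^ p := Real.rpow_nonneg (by positivity) p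
        have h2 : (2 * R)⁻¹ * ‖x‖ < 2⁻¹ := by
          rw [mul_inv, mul_comm, ← mul_assoc]
          have : ‖x‖ * R⁻¹ < 1 := by
            rw [← div_eq_mul_inv, div_lt_one hRpos]; exact hcase
          nlinarith
        linarith
    calc c * Real.exp (-((‖x‖ / R) ^ p / 2))
        ≤ c * Real.exp (-((2 * R)⁻¹ * ‖x‖ - 2⁻¹)) := by
          apply mul_le_mul_of_nonneg_left (Real.exp_le_exp.2 (by linarith)) hc.le
      _ = c * Real.exp (2⁻¹ : ℝ) * Real.exp (-((2 * R)⁻¹ * ‖x‖)) := by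
          rw [mul_assoc, ← Real.exp_add]; ring_nf
  set I : ℝ≥0∞ := ∫⁻ x, ENNReal.ofReal (h x) with hIdef
  have hImeas : Measurable fun x : EuclideanSpace ℝ (Fin d) => ENNReal.ofReal (h x) :=
    hhcont.measurable.ennreal_ofReal
  have hItop : I ≠ ⊤ := by
    have := (hasFiniteIntegral_iff_ofReal
      (Filter.Eventually.of_forall fun x => (hhpos x).le)).1 hInth.hasFiniteIntegral
    exact this.ne
  -- constants
  refine ⟨ENNReal.toReal I * (4 * P) + 1, (4 * P)⁻¹, R, by positivity, by positivity, hRpos, ?_⟩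
  intro θ hθ t ht
  have htpos : 0 < t := lt_of_lt_of_le hRpos ht
  have ht1 : (1:ℝ) ≤ t := le_trans hR1 ht
  have htp : (0:ℝ) < t ^ p := Real.rpow_pos_of_pos htpos p
  set S := {x : EuclideanSpace ℝ (Fin d) | t ≤ ⟪x, θ⟫} with hSdef
  have hSm : MeasurableSet S :=
    measurableSet_le measurable_const (continuous_id.inner continuous_const).measurable
  set Et : ℝ := Real.exp (-(t ^ p / (2 * P))) with hEtdef
  have hEtpos : 0 < Et := Real.exp_pos _
  -- pointwise bound on S
  have hpt : ∀ x ∈ S, ENNReal.ofReal (f x) ≤ ENNReal.ofReal (Et * h x) := by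
    intro x hxS
    have hinn : t ≤ ‖x‖ := by
      have h1 : ⟪x, θ⟫ ≤ ‖x‖ * ‖θ‖ := real_inner_le_norm x θ
      rw [hθ, mul_one] at h1
      exact le_trans hxS h1
    have hxR : R ≤ ‖x‖ := le_trans ht hinn
    have hgx : ‖x‖ / R ≤ g x := hgrow x hxR
    have htR : t / R ≤ ‖x‖ / R := by gcongr
    have hA : (t / R) ^ p ≤ g x ^ p :=
      Real.rpow_le_rpow (by positivity) (le_trans htR hgx) hp0.le
    have hB : (‖x‖ / R) ^ p ≤ g x ^ p :=
      Real.rpow_le_rpow (by positivity) hgx hp0.le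
    have hdvp : (t / R) ^ p = t ^ p / P := Real.div_rpow htpos.le hRpos.le p
    rw [hdvp] at hA
    have hEh : Et * h x = c * Real.exp (-(t ^ p / (2 * P)) + -((‖x‖ / R) ^ p / 2)) := by
      rw [hEtdef, hhdef, Real.exp_add]; ring
    apply ENNReal.ofReal_le_ofReal
    rw [hf x, hEh]
    have hhalf : t ^ p / (2 * P) = t ^ p / P / 2 := by ring
    apply mul_le_mul_of_nonneg_left (Real.exp_le_exp.2 (by rw [hhalf]; linarith)) hc.le
  -- main chain
  have hchain : μ S ≤ ENNReal.ofReal Et * I := by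
    rw [hμ, withDensity_apply _ hSm]
    calc ∫⁻ x in S, ENNReal.ofReal (f x)
        ≤ ∫⁻ x in S, ENNReal.ofReal (Et * h x) :=
          setLIntegral_mono ((continuous_const.mul hhcont).measurable.ennreal_ofReal) hpt
      _ ≤ ∫⁻ x, ENNReal.ofReal (Et * h x) := setLIntegral_le_lintegral _ _
      _ = ENNReal.ofReal Et * I := by
          simp_rw [ENNReal.ofReal_mul hEtpos.le]
          rw [lintegral_const_mul _ hImeas]
  have hfinal : (μ S).toReal ≤ ENNReal.toReal I * Et := by
    have h1 := ENNReal.toReal_mono (ENNReal.mul_ne_top ENNReal.ofReal_ne_top hItop) hchain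
    rwa [ENNReal.toReal_mul, ENNReal.toReal_ofReal hEtpos.le, mul_comm] at h1
  have hsplit : Et = Real.exp (-((4 * P)⁻¹ * t ^ p)) * Real.exp (-((4 * P)⁻¹ * t ^ p)) := by
    rw [hEtdef, ← Real.exp_add]
    congr 1
    have h4P : ((4:ℝ) * P)⁻¹ = 4⁻¹ * P⁻¹ := by rw [mul_inv]
    rw [h4P]
    ring
  have hu : (0:ℝ) < (4 * P)⁻¹ * t ^ p := by positivity
  have hexp : Real.exp (-((4 * P)⁻¹ * t ^ p)) ≤ ((4 * P)⁻¹ * t ^ p)⁻¹ := by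
    rw [Real.exp_neg]
    exact inv_anti₀ hu (by linarith [Real.add_one_le_exp ((4 * P)⁻¹ * t ^ p)])
  have hmid : ENNReal.toReal I * Real.exp (-((4 * P)⁻¹ * t ^ p))
      ≤ (ENNReal.toReal I * (4 * P) + 1) * t ^ (1 - p) := by
    calc ENNReal.toReal I * Real.exp (-((4 * P)⁻¹ * t ^ p))
        ≤ ENNReal.toReal I * ((4 * P)⁻¹ * t ^ p)⁻¹ :=
          mul_le_mul_of_nonneg_left hexp ENNReal.toReal_nonneg
      _ = ENNReal.toReal I * (4 * P) * (t ^ p)⁻¹ := by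
          rw [mul_inv, inv_inv]; ring
      _ = ENNReal.toReal I * (4 * P) * t ^ (-p) := by
          rw [Real.rpow_neg htpos.le]
      _ ≤ (ENNReal.toReal I * (4 * P) + 1) * t ^ (1 - p) := by
          apply mul_le_mul (by linarith)
            (Real.rpow_le_rpow_of_exponent_le ht1 (by linarith))
            (Real.rpow_nonneg htpos.le _) (by positivity)
  calc (μ S).toReal ≤ ENNReal.toReal I * Et := hfinal
    _ = ENNReal.toReal I * Real.exp (-((4 * P)⁻¹ * t ^ p))
          * Real.exp (-((4 * P)⁻¹ * t ^ p)) := by rw [hsplit]; ring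
    _ ≤ (ENNReal.toReal I * (4 * P) + 1) * t ^ (1 - p)
          * Real.exp (-((4 * P)⁻¹ * t ^ p)) :=
        mul_le_mul_of_nonneg_right hmid (Real.exp_pos _).le
end

section
/- Let μ be a probability measure on ℝ^d with non-vanishing log-concave density f, and for ε > 0 let D_ε = {x : f(x) ≥ ε}. Then there exist c, ε₀ > 0 such that for all ε ∈ (0, ε₀), μ(ℝ^d \ D_ε) ≤ c·ε·(log(1/ε))^d. -/
open MeasureTheory Set Filter

open Real Module

private lemma aux_lin (d : ℕ) (g : EuclideanSpace ℝ (Fin d) → ℝ)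
    (hgconv : ConvexOn ℝ Set.univ g)
    (hgtend : Filter.Tendsto g (Filter.comap (fun x => ‖x‖) Filter.atTop) Filter.atTop)
    (hgc : Continuous g) :
    ∃ a b : ℝ, 0 < a ∧ ∀ x, a * ‖x‖ - b ≤ g x := by
  have h1 : ∀ᶠ x in Filter.comap (fun x : EuclideanSpace ℝ (Fin d) => ‖x‖) Filter.atTop,
      g 0 + 1 ≤ g x := hgtend (eventually_ge_atTop (g 0 + 1))
  rw [Filter.eventually_comap] at h1
  obtain ⟨R₀, hR₀⟩ := Filter.eventually_atTop.mp h1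
  set R : ℝ := max R₀ 1 with hRdef
  have hR1 : (1:ℝ) ≤ R := le_max_right _ _
  have hRpos : 0 < R := lt_of_lt_of_le one_pos hR1
  have hbig : ∀ x : EuclideanSpace ℝ (Fin d), R ≤ ‖x‖ → g 0 + ‖x‖ / R ≤ g x := by
    intro x hx
    have hxpos : 0 < ‖x‖ := lt_of_lt_of_le hRpos hx
    set θ : ℝ := R / ‖x‖ with hθdef
    have hθ0 : 0 < θ := div_pos hRpos hxpos
    have hθ1 : θ ≤ 1 := (div_le_one hxpos).mpr hx
    have hnormy : ‖θ • x‖ = R := by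
      rw [norm_smul, Real.norm_eq_abs, abs_of_pos hθ0, hθdef]
      field_simp
    have hy : g 0 + 1 ≤ g (θ • x) := by
      apply hR₀ ‖θ • x‖ (by rw [hnormy]; exact le_max_left _ _) _ rfl
    have hconv := hgconv.2 (Set.mem_univ x) (Set.mem_univ (0 : EuclideanSpace ℝ (Fin d)))
      (le_of_lt hθ0) (by linarith : (0:ℝ) ≤ 1 - θ) (by ring)
    rw [smul_zero, add_zero] at hconv
    simp only [smul_eq_mul] at hconv
    -- hconv : g (θ • x) ≤ θ * g x + (1 - θ) * g 0
    have key : 1 ≤ θ * (g x - g 0) := by nlinarith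
    have : 1 / θ ≤ g x - g 0 := by
      rw [div_le_iff₀ hθ0]; nlinarith
    have hinv : 1 / θ = ‖x‖ / R := by rw [hθdef]; field_simp
    linarith [hinv ▸ this]
  obtain ⟨z, hz, hminz⟩ := (isCompact_closedBall (0 : EuclideanSpace ℝ (Fin d)) R).exists_isMinOn
    ⟨0, Metric.mem_closedBall_self (le_of_lt hRpos)⟩ hgc.continuousOn
  set m : ℝ := g z with hmdef
  refine ⟨R⁻¹, 1 - min m (g 0), inv_pos.mpr hRpos, fun x => ?_⟩
  rcases le_or_gt ‖x‖ R with hle | hgt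
  · have hm : m ≤ g x := hminz (by simpa [Metric.mem_closedBall, dist_zero_right] using hle)
    have : R⁻¹ * ‖x‖ ≤ 1 := by
      rw [inv_mul_le_iff₀ hRpos]; linarith
    have := min_le_left m (g 0)
    linarith
  · have := hbig x (le_of_lt hgt)
    have hdiv : ‖x‖ / R = R⁻¹ * ‖x‖ := by ring
    have := min_le_right m (g 0)
    linarith [hbig x (le_of_lt hgt), hdiv]

private lemma aux_int (d : ℕ) {a : ℝ} (ha : 0 < a) :
    Integrable (fun x : EuclideanSpace ℝ (Fin d) => Real.exp (-(a * ‖x‖))) := by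
  set K : ℝ := max ((d + 1) / a) 1 with hKdef
  have hK1 : (1:ℝ) ≤ K := le_max_right _ _
  have hK0 : (0:ℝ) < K := lt_of_lt_of_le one_pos hK1
  have hKa : (d + 1) / a ≤ K := le_max_left _ _
  have key : ∀ u : ℝ, 0 ≤ u → Real.exp (-(a * u)) ≤ K ^ (d+1) * (1 + u) ^ (-(d+1:ℝ)) := by
    intro u hu
    have h1 : 1 + u ≤ K * Real.exp (u / K) := by
      have h2 : 1 + u / K ≤ Real.exp (u / K) := by have := Real.add_one_le_exp (u / K); linarith
      have : K * (1 + u / K) = K + u := by field_simp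
      nlinarith [Real.exp_pos (u / K)]
    have h3 : u / K ≤ a * u / (d + 1) := by
      rw [div_le_div_iff₀ hK0 (by positivity)]
      calc u * (d+1) = ((d+1)/a) * (a * u) := by field_simp
        _ ≤ K * (a * u) := by
            apply mul_le_mul_of_nonneg_right hKa (by positivity)
        _ = a * u * K := by ring
    have h4 : 1 + u ≤ K * Real.exp (a * u / (d + 1)) := by
      refine h1.trans (mul_le_mul_of_nonneg_left (Real.exp_le_exp.mpr h3) (le_of_lt hK0))
    have h5 : (1 + u) ^ (d+1) ≤ K ^ (d+1) * Real.exp (a * u) := by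
      calc (1 + u) ^ (d+1) ≤ (K * Real.exp (a * u / (d + 1))) ^ (d+1) := by
            apply pow_le_pow_left₀ (by linarith) h4
        _ = K ^ (d+1) * (Real.exp (a * u / (d + 1))) ^ (d+1) := by rw [mul_pow]
        _ = K ^ (d+1) * Real.exp (a * u) := by
            rw [← Real.exp_nat_mul]
            congr 2
            push_cast
            field_simp
    have hpos : (0:ℝ) < 1 + u := by linarith
    rw [Real.rpow_neg (le_of_lt hpos)]
    rw [show ((d:ℝ)+1) = ((d+1 : ℕ) : ℝ) by push_cast; ring, Real.rpow_natCast]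
    rw [Real.exp_neg]
    rw [inv_le_iff_one_le_mul₀ (Real.exp_pos _)]
    have hc : ((1+u):ℝ)^(d+1) * ((1+u)^(d+1))⁻¹ = 1 := mul_inv_cancel₀ (by positivity)
    nlinarith [Real.exp_pos (a*u), pow_pos hpos (d+1), inv_pos.mpr (pow_pos hpos (d+1))]
  have hfin : (finrank ℝ (EuclideanSpace ℝ (Fin d)) : ℝ) < (d+1:ℝ) := by
    rw [finrank_euclideanSpace_fin]; linarith
  refine ((integrable_one_add_norm (μ := volume) hfin).const_mul (K ^ (d+1))).mono'
    ?_ (Filter.Eventually.of_forall fun x => ?_)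
  · exact ((Real.continuous_exp.comp (by continuity)).aestronglyMeasurable)
  · rw [Real.norm_eq_abs, abs_of_pos (Real.exp_pos _)]
    exact key ‖x‖ (norm_nonneg x)

theorem stmt13 (d : ℕ) (g : EuclideanSpace ℝ (Fin d) → ℝ)
    (hgconv : ConvexOn ℝ Set.univ g)
    (hgtend : Filter.Tendsto g (Filter.comap (fun x => ‖x‖) Filter.atTop) Filter.atTop)
    (f : EuclideanSpace ℝ (Fin d) → ℝ)
    (hf : ∀ x, f x = Real.exp (-g x))
    (μ : Measure (EuclideanSpace ℝ (Fin d)))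
    (hμ : μ = MeasureTheory.volume.withDensity (fun x => ENNReal.ofReal (f x)))
    (hprob : IsProbabilityMeasure μ) :
    ∃ c ε₀ : ℝ, 0 < c ∧ 0 < ε₀ ∧
      ∀ ε : ℝ, ε ∈ Set.Ioo 0 ε₀ →
        (μ {x | ε ≤ f x}ᶜ).toReal ≤ c * ε * (Real.log ε⁻¹) ^ d := by
  have hgc : Continuous g := continuousOn_univ.mp (hgconv.continuousOn isOpen_univ)
  have hfc : Continuous f := by
    have : f = fun x => Real.exp (-g x) := funext hf
    rw [this]; exact Real.continuous_exp.comp hgc.neg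
  obtain ⟨a, b, ha, hab⟩ := aux_lin d g hgconv hgtend hgc
  have hInt := aux_int d ha
  set I : ENNReal := ∫⁻ x : EuclideanSpace ℝ (Fin d),
    ENNReal.ofReal (Real.exp (-(a * ‖x‖))) with hIdef
  have hItop : I ≠ ⊤ := hInt.lintegral_lt_top.ne
  have hφmeas : Measurable fun x : EuclideanSpace ℝ (Fin d) =>
      ENNReal.ofReal (Real.exp (-(a * ‖x‖))) :=
    (Real.continuous_exp.comp (by continuity)).measurable.ennreal_ofReal
  refine ⟨Real.exp 1 * Real.exp |b| * (I.toReal + 1), Real.exp (-1), by positivity,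
    Real.exp_pos _, ?_⟩
  rintro ε ⟨hε0, hε1⟩
  set t : ℝ := Real.log ε⁻¹ with htdef
  have hεinv : Real.exp 1 < ε⁻¹ := by
    rw [Real.exp_neg] at hε1
    rw [show ε⁻¹ = ε⁻¹ from rfl]
    have := (inv_lt_inv₀ (inv_pos.mpr (Real.exp_pos 1)) hε0).mpr hε1
    simpa using this
  have ht1 : 1 < t := by
    rw [htdef, show (1:ℝ) = Real.log (Real.exp 1) by rw [Real.log_exp]]
    exact Real.log_lt_log (Real.exp_pos 1) hεinv
  have ht0 : 0 < t := lt_trans one_pos ht1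
  set δ : ℝ := t⁻¹ with hδdef
  have hδ0 : 0 < δ := inv_pos.mpr ht0
  have hδ1 : δ ≤ 1 := by
    rw [hδdef]; exact inv_le_one_of_one_le₀ (le_of_lt ht1)
  have hδt : δ * t = 1 := inv_mul_cancel₀ (ne_of_gt ht0)
  -- The complement set
  have hSmeas : MeasurableSet ({x : EuclideanSpace ℝ (Fin d) | ε ≤ f x}ᶜ) :=
    (measurableSet_le measurable_const hfc.measurable).compl
  -- pointwise bound on the set
  have hpt : ∀ x ∈ {x : EuclideanSpace ℝ (Fin d) | ε ≤ f x}ᶜ,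
      ENNReal.ofReal (f x) ≤
      ENNReal.ofReal (Real.exp 1 * ε * Real.exp |b| * Real.exp (-(a * ‖δ • x‖))) := by
    intro x hx
    apply ENNReal.ofReal_le_ofReal
    simp only [Set.mem_compl_iff, Set.mem_setOf_eq, not_le] at hx
    have hgx : t < g x := by
      rw [hf] at hx
      have : Real.exp (-g x) < Real.exp (Real.log ε) := by rwa [Real.exp_log hε0]
      have h2 : -g x < Real.log ε := Real.exp_lt_exp.mp this
      rw [htdef, Real.log_inv]; linarith
    have hdec : f x = Real.exp (-((1-δ) * g x)) * Real.exp (-(δ * g x)) := by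
      rw [hf, ← Real.exp_add]; ring_nf
    have h1 : Real.exp (-((1-δ) * g x)) ≤ Real.exp (-((1-δ) * t)) := by
      apply Real.exp_le_exp.mpr
      have h1δ : 0 ≤ 1 - δ := by linarith
      nlinarith
    have h2 : Real.exp (-((1-δ)*t)) = Real.exp 1 * ε := by
      rw [show -((1-δ)*t) = -t + δ * t by ring, hδt, Real.exp_add]
      rw [show -t = Real.log ε by rw [htdef, Real.log_inv]; ring, Real.exp_log hε0]
      ring
    have h3 : Real.exp (-(δ * g x)) ≤ Real.exp |b| * Real.exp (-(a * ‖δ • x‖)) := by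
      rw [← Real.exp_add]
      apply Real.exp_le_exp.mpr
      have hnrm : ‖δ • x‖ = δ * ‖x‖ := by
        rw [norm_smul, Real.norm_eq_abs, abs_of_pos hδ0]
      rw [hnrm]
      have hab' := hab x
      have hb' : δ * b ≤ |b| := by
        rcases le_or_gt 0 b with hb | hb
        · calc δ * b ≤ 1 * b := by nlinarith
            _ = b := by ring
            _ ≤ |b| := le_abs_self b
        · nlinarith [abs_nonneg b]
      nlinarith
    calc f x = Real.exp (-((1-δ) * g x)) * Real.exp (-(δ * g x)) := hdec
      _ ≤ (Real.exp 1 * ε) * (Real.exp |b| * Real.exp (-(a * ‖δ • x‖))) := by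
          apply mul_le_mul (h2 ▸ h1) h3 (le_of_lt (Real.exp_pos _)) (by positivity)
      _ = Real.exp 1 * ε * Real.exp |b| * Real.exp (-(a * ‖δ • x‖)) := by ring
  -- the scaled integral
  have hmap : ∫⁻ x : EuclideanSpace ℝ (Fin d),
      ENNReal.ofReal (Real.exp (-(a * ‖δ • x‖))) = ENNReal.ofReal (t ^ d) * I := by
    have h1 : ∫⁻ x : EuclideanSpace ℝ (Fin d),
        ENNReal.ofReal (Real.exp (-(a * ‖δ • x‖))) =
        ∫⁻ y, ENNReal.ofReal (Real.exp (-(a * ‖y‖)))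
          ∂(Measure.map (δ • ·) (volume : Measure (EuclideanSpace ℝ (Fin d)))) := by
      rw [lintegral_map hφmeas (measurable_const_smul δ)]
    rw [h1, Measure.map_addHaar_smul volume (ne_of_gt hδ0), lintegral_smul_measure]
    congr 1
    rw [finrank_euclideanSpace_fin]
    congr 1
    rw [abs_of_pos (by positivity : (0:ℝ) < (δ^d)⁻¹), hδdef, inv_pow, inv_inv]
  -- main estimate
  have hmain : μ ({x : EuclideanSpace ℝ (Fin d) | ε ≤ f x}ᶜ) ≤
      ENNReal.ofReal (Real.exp 1 * ε * Real.exp |b|) * (ENNReal.ofReal (t ^ d) * I) := by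
    rw [hμ, withDensity_apply _ hSmeas]
    calc ∫⁻ x in {x | ε ≤ f x}ᶜ, ENNReal.ofReal (f x) ∂volume
        ≤ ∫⁻ x in {x | ε ≤ f x}ᶜ,
            ENNReal.ofReal (Real.exp 1 * ε * Real.exp |b| * Real.exp (-(a * ‖δ • x‖))) ∂volume :=
          setLIntegral_mono' hSmeas hpt
      _ ≤ ∫⁻ x, ENNReal.ofReal
            (Real.exp 1 * ε * Real.exp |b| * Real.exp (-(a * ‖δ • x‖))) ∂volume :=
          setLIntegral_le_lintegral _ _
      _ = ∫⁻ x, ENNReal.ofReal (Real.exp 1 * ε * Real.exp |b|) *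
            ENNReal.ofReal (Real.exp (-(a * ‖δ • x‖))) ∂volume := by
          congr 1; funext x
          rw [← ENNReal.ofReal_mul (by positivity)]
      _ = ENNReal.ofReal (Real.exp 1 * ε * Real.exp |b|) *
            ∫⁻ x, ENNReal.ofReal (Real.exp (-(a * ‖δ • x‖))) ∂volume := by
          rw [lintegral_const_mul' _ _ ENNReal.ofReal_ne_top]
      _ = ENNReal.ofReal (Real.exp 1 * ε * Real.exp |b|) * (ENNReal.ofReal (t ^ d) * I) := by
          rw [hmap]
  -- convert to real
  have hRHS : ENNReal.ofReal (Real.exp 1 * ε * Real.exp |b|) * (ENNReal.ofReal (t ^ d) * I) ≠ ⊤ :=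
    ENNReal.mul_ne_top ENNReal.ofReal_ne_top
      (ENNReal.mul_ne_top ENNReal.ofReal_ne_top hItop)
  have hfinal := ENNReal.toReal_mono hRHS hmain
  rw [ENNReal.toReal_mul, ENNReal.toReal_mul, ENNReal.toReal_ofReal (by positivity),
    ENNReal.toReal_ofReal (by positivity)] at hfinal
  refine hfinal.trans ?_
  have hI0 : 0 ≤ I.toReal := ENNReal.toReal_nonneg
  have htd : 0 ≤ t ^ d := by positivity
  rw [htdef] at *
  nlinarith [Real.exp_pos 1, Real.exp_pos |b|,
    mul_pos (Real.exp_pos 1) (Real.exp_pos |b|), htd, hI0,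
    mul_nonneg (mul_nonneg (le_of_lt (Real.exp_pos 1)) (le_of_lt (Real.exp_pos |b|)))
      (mul_nonneg (le_of_lt hε0) htd)]
end

section
/- Let K, L ⊂ ℝ^d be convex bodies such that the John ellipsoid of K is the Euclidean unit ball B₂^d (so B₂^d ⊆ K ⊆ dB₂^d), and suppose there exist x, x' ∈ int(K ∩ L) and 0 < r < 1/(8d) with (1+r)^{-1}(K - x) + x ⊆ L ⊆ (1+r)(K - x') + x'. Then the Hausdorff distance satisfies d_H(K,L) ≤ 4dr, and the logarithmic Hausdorff distance satisfies d_L(K,L) ≤ 1 + 8dr. -/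
open Metric Set
open scoped Pointwise

set_option maxHeartbeats 1000000 in
theorem stmt15 (d : ℕ) (hd : 0 < d)
    (K L : Set (EuclideanSpace ℝ (Fin d)))
    (hKconv : Convex ℝ K) (hKcomp : IsCompact K)
    (hLconv : Convex ℝ L) (hLcomp : IsCompact L)
    (hKball : Metric.closedBall (0 : EuclideanSpace ℝ (Fin d)) 1 ⊆ K)
    (hKd : K ⊆ Metric.closedBall (0 : EuclideanSpace ℝ (Fin d)) d)
    (x x' : EuclideanSpace ℝ (Fin d))
    (hx : x ∈ interior K ∩ interior L) (hx' : x' ∈ interior K ∩ interior L)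
    (r : ℝ) (hr₀ : 0 < r) (hr₁ : r < 1 / (8 * d))
    (h₁ : (fun y => (1 + r)⁻¹ • (y - x) + x) '' K ⊆ L)
    (h₂ : L ⊆ (fun y => (1 + r) • (y - x') + x') '' K) :
    Metric.hausdorffDist K L ≤ 4 * d * r ∧
    ∃ z ∈ interior K ∩ interior L,
      (fun y => (1 + 8 * d * r)⁻¹ • (y - z) + z) '' L ⊆ K ∧
      K ⊆ (fun y => (1 + 8 * d * r) • (y - z) + z) '' L := by
  have hd1 : (1:ℝ) ≤ d := by exact_mod_cast hd
  have hdr : (d:ℝ) * r < 1/8 := by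
    have h8 : (0:ℝ) < 8 * d := by positivity
    rw [lt_div_iff₀ h8] at hr₁
    nlinarith
  have hr8 : r < 1/8 := by nlinarith
  have h1r : (0:ℝ) < 1 + r := by linarith
  have h1r' : (1 + r : ℝ) ≠ 0 := ne_of_gt h1r
  have hμ0 : (0:ℝ) < 1 + 8 * d * r := by nlinarith
  have hμ0' : (1 + 8 * (d:ℝ) * r) ≠ 0 := ne_of_gt hμ0
  have h7 : (0:ℝ) < 8 * (d:ℝ) - 1 := by nlinarith
  have h7' : (8 * (d:ℝ) - 1) ≠ 0 := ne_of_gt h7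
  have hKnorm : ∀ k ∈ K, ‖k‖ ≤ (d:ℝ) := by
    intro k hk
    have := hKd hk
    simpa [mem_closedBall, dist_zero_right] using this
  have hxK : x ∈ K := interior_subset hx.1
  have hx'K : x' ∈ K := interior_subset hx'.1
  have hxn : ‖x‖ ≤ (d:ℝ) := hKnorm x hxK
  have hx'n : ‖x'‖ ≤ (d:ℝ) := hKnorm x' hx'K
  -- the half ball is contained in L
  have hhalf : closedBall (0 : EuclideanSpace ℝ (Fin d)) (1/2) ⊆ L := by
    intro w hw
    have hw' : ‖w‖ ≤ 1/2 := by simpa [mem_closedBall, dist_zero_right] using hw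
    have hu : (1 + r) • (w - x) + x ∈ K := by
      apply hKball
      have heq : (1 + r) • (w - x) + x = (1+r) • w + (-r) • x := by module
      rw [mem_closedBall, dist_zero_right, heq]
      calc ‖(1+r) • w + (-r) • x‖ ≤ ‖(1+r) • w‖ + ‖(-r) • x‖ := norm_add_le _ _
        _ = (1+r) * ‖w‖ + r * ‖x‖ := by
            rw [norm_smul, norm_smul, Real.norm_eq_abs, Real.norm_eq_abs,
              abs_of_pos h1r, abs_of_neg (by linarith : (-r:ℝ) < 0)]
            ring
        _ ≤ 1 := by nlinarith [norm_nonneg w, norm_nonneg x]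
    have hmem : (1+r)⁻¹ • ((1 + r) • (w - x) + x - x) + x ∈ L := h₁ ⟨_, hu, rfl⟩
    have heq2 : (1+r)⁻¹ • ((1 + r) • (w - x) + x - x) + x = w := by
      match_scalars <;> (field_simp; try ring)
    rwa [heq2] at hmem
  have h0K : (0 : EuclideanSpace ℝ (Fin d)) ∈ interior K :=
    interior_maximal (ball_subset_closedBall.trans hKball) isOpen_ball
      (mem_ball_self one_pos)
  have h0L : (0 : EuclideanSpace ℝ (Fin d)) ∈ interior L :=
    interior_maximal (ball_subset_closedBall.trans hhalf) isOpen_ball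
      (mem_ball_self (by norm_num))
  constructor
  · -- Hausdorff distance bound
    apply hausdorffDist_le_of_mem_dist (by positivity)
    · intro k hk
      refine ⟨(1+r)⁻¹ • (k - x) + x, h₁ ⟨k, hk, rfl⟩, ?_⟩
      have heq : k - ((1+r)⁻¹ • (k - x) + x) = (r/(1+r)) • (k - x) := by
        match_scalars <;> (field_simp; try ring) <;> ring
      rw [dist_eq_norm, heq, norm_smul, Real.norm_eq_abs,
        abs_of_pos (by positivity : (0:ℝ) < r/(1+r))]
      have hkx : ‖k - x‖ ≤ 2*d := (norm_sub_le _ _).trans (by linarith [hKnorm k hk])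
      have hq : r/(1+r) ≤ r := by rw [div_le_iff₀ h1r]; nlinarith
      nlinarith [norm_nonneg (k - x), mul_le_mul_of_nonneg_right hq (norm_nonneg (k-x))]
    · intro y hy
      obtain ⟨k, hk, hky⟩ := h₂ hy
      refine ⟨k, hk, ?_⟩
      have heq : y - k = r • (k - x') := by
        rw [← hky]; module
      rw [dist_eq_norm, heq, norm_smul, Real.norm_eq_abs, abs_of_pos hr₀]
      have hkx : ‖k - x'‖ ≤ 2*d := (norm_sub_le _ _).trans (by linarith [hKnorm k hk])
      nlinarith [norm_nonneg (k - x')]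
  · refine ⟨0, ⟨h0K, h0L⟩, ?_, ?_⟩
    · rintro p ⟨y, hy, rfl⟩
      obtain ⟨k, hk, hky⟩ := h₂ hy
      set u : EuclideanSpace ℝ (Fin d) := (-(8*(d:ℝ)-1)⁻¹) • x' with hu
      have hu1 : u ∈ K := by
        apply hKball
        rw [mem_closedBall, dist_zero_right, hu, norm_smul, Real.norm_eq_abs,
          abs_neg, abs_of_pos (inv_pos.mpr h7)]
        calc (8*(d:ℝ)-1)⁻¹ * ‖x'‖ ≤ (8*(d:ℝ)-1)⁻¹ * d :=
              mul_le_mul_of_nonneg_left hx'n (le_of_lt (inv_pos.mpr h7))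
          _ ≤ 1 := by rw [inv_mul_le_iff₀ h7]; nlinarith
      have key : (1+8*(d:ℝ)*r)⁻¹ • (y - 0) + 0
          = ((1+r)/(1+8*(d:ℝ)*r)) • k + ((r*(8*(d:ℝ)-1))/(1+8*(d:ℝ)*r)) • u := by
        rw [← hky, hu]
        match_scalars <;> (field_simp; try ring)
      show (1+8*(d:ℝ)*r)⁻¹ • (y - 0) + 0 ∈ K
      rw [key]
      exact hKconv hk hu1 (by positivity)
        (div_nonneg (by nlinarith) (le_of_lt hμ0)) (by field_simp; ring)
    · intro k hk
      have hl : (1+r)⁻¹ • (k - x) + x ∈ L := h₁ ⟨k, hk, rfl⟩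
      have hv : (-(8*(d:ℝ)-1)⁻¹) • x ∈ L := by
        apply hhalf
        rw [mem_closedBall, dist_zero_right, norm_smul, Real.norm_eq_abs,
          abs_neg, abs_of_pos (inv_pos.mpr h7)]
        calc (8*(d:ℝ)-1)⁻¹ * ‖x‖ ≤ (8*(d:ℝ)-1)⁻¹ * d :=
              mul_le_mul_of_nonneg_left hxn (le_of_lt (inv_pos.mpr h7))
          _ ≤ 1/2 := by rw [inv_mul_le_iff₀ h7]; nlinarith
      refine ⟨(1+8*(d:ℝ)*r)⁻¹ • k, ?_, ?_⟩
      · have key : (1+8*(d:ℝ)*r)⁻¹ • k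
            = ((1+r)/(1+8*(d:ℝ)*r)) • ((1+r)⁻¹ • (k - x) + x)
              + ((r*(8*(d:ℝ)-1))/(1+8*(d:ℝ)*r)) • ((-(8*(d:ℝ)-1)⁻¹) • x) := by
          match_scalars <;> (field_simp; try ring)
        rw [key]
        exact hLconv hl hv (by positivity)
          (div_nonneg (by nlinarith) (le_of_lt hμ0)) (by field_simp; ring)
      · show (1+8*(d:ℝ)*r) • ((1+8*(d:ℝ)*r)⁻¹ • k - 0) + 0 = k
        match_scalars <;> (field_simp; try ring)
end
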